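/- arXiv:1008.3602 — 7 statements merged into one kernel-verified Lean document; each statement's English description precedes it below -/
import Mathlib

section
/- Define θ : ℝ → ℝ by θ(s) = −s³ + 3s·sinh²(s) + 3·sinh³(s)·cosh(s) − 3s²·sinh(s)·cosh(s) − 2s³·cosh²(s). Then θ(s) ≥ 0 for every s ≥ 1 (indeed θ(1) > 0 and θ'(s) > 0 for all s ≥ 1). -/
private lemma my_cosh_lb : ∀ t : ℝ, 0 ≤ t → 1 + t^2/2 ≤ Real.cosh t := by
  have hf : ∀ t : ℝ, HasDerivAt (fun u => Real.cosh u - u^2/2) (Real.sinh t - t) t := by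
    intro t
    have h : HasDerivAt (fun u => Real.cosh u - u^2/2) _ t := (Real.hasDerivAt_cosh t).sub ((hasDerivAt_pow 2 t).div_const 2)
    convert h using 1
    push_cast; ring
  intro t ht
  have hmono : MonotoneOn (fun u => Real.cosh u - u^2/2) (Set.Ici (0:ℝ)) := by
    refine monotoneOn_of_deriv_nonneg (convex_Ici 0) (Continuous.continuousOn (by fun_prop))
      (fun x _ => ((hf x).differentiableAt).differentiableWithinAt) ?_
    intro x hx
    rw [interior_Ici] at hx
    rw [(hf x).deriv]
    have := (Real.self_lt_sinh_iff (x := x)).2 hx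
    linarith
  have h0 : (fun u => Real.cosh u - u^2/2) 0 ≤ (fun u => Real.cosh u - u^2/2) t :=
    hmono (Set.self_mem_Ici) ht ht
  simp only [Real.cosh_zero] at h0
  norm_num at h0
  linarith

private lemma my_sinh_lb : ∀ t : ℝ, 0 ≤ t → t + t^3/6 ≤ Real.sinh t := by
  have hf : ∀ t : ℝ, HasDerivAt (fun u => Real.sinh u - u - u^3/6) (Real.cosh t - 1 - t^2/2) t := by
    intro t
    have h : HasDerivAt (fun u => Real.sinh u - u - u^3/6) _ t := ((Real.hasDerivAt_sinh t).sub (hasDerivAt_id t)).sub ((hasDerivAt_pow 3 t).div_const 6)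
    convert h using 1
    push_cast; ring
  intro t ht
  have hmono : MonotoneOn (fun u => Real.sinh u - u - u^3/6) (Set.Ici (0:ℝ)) := by
    refine monotoneOn_of_deriv_nonneg (convex_Ici 0) (Continuous.continuousOn (by fun_prop))
      (fun x _ => ((hf x).differentiableAt).differentiableWithinAt) ?_
    intro x hx
    rw [interior_Ici] at hx
    rw [(hf x).deriv]
    have := my_cosh_lb x hx.le
    linarith
  have h0 : (fun u => Real.sinh u - u - u^3/6) 0 ≤ (fun u => Real.sinh u - u - u^3/6) t :=
    hmono (Set.self_mem_Ici) ht ht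
  simp only [Real.sinh_zero] at h0
  norm_num at h0
  linarith

set_option maxHeartbeats 1000000 in
/-- The auxiliary function
`θ(s) = −s³ + 3s sinh²s + 3 sinh³s cosh s − 3s² sinh s cosh s − 2s³ cosh²s`
satisfies `θ(s) ≥ 0` for all `s ≥ 1`; indeed `θ(1) > 0` and `θ'(s) > 0` for `s ≥ 1`. -/
theorem theta_nonneg (θ : ℝ → ℝ)
    (hθ : ∀ s, θ s = -s ^ 3 + 3 * s * Real.sinh s ^ 2
      + 3 * Real.sinh s ^ 3 * Real.cosh s
      - 3 * s ^ 2 * Real.sinh s * Real.cosh s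
      - 2 * s ^ 3 * Real.cosh s ^ 2) :
    (∀ s : ℝ, 1 ≤ s → 0 ≤ θ s) ∧ 0 < θ 1 ∧ (∀ s : ℝ, 1 ≤ s → 0 < deriv θ s) := by
  have hθf : θ = fun s => -s ^ 3 + 3 * s * Real.sinh s ^ 2
      + 3 * Real.sinh s ^ 3 * Real.cosh s
      - 3 * s ^ 2 * Real.sinh s * Real.cosh s
      - 2 * s ^ 3 * Real.cosh s ^ 2 := funext hθ
  subst hθf
  -- derivative
  have hD : ∀ s : ℝ, HasDerivAt (fun s : ℝ => -s ^ 3 + 3 * s * Real.sinh s ^ 2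
      + 3 * Real.sinh s ^ 3 * Real.cosh s
      - 3 * s ^ 2 * Real.sinh s * Real.cosh s
      - 2 * s ^ 3 * Real.cosh s ^ 2)
      (4 * Real.cosh s * (3 * Real.cosh s * (Real.sinh s ^ 2 - s ^ 2) - s ^ 3 * Real.sinh s)) s := by
    intro s
    have hx := Real.hasDerivAt_sinh s
    have hc := Real.hasDerivAt_cosh s
    have hid : HasDerivAt (fun u : ℝ => u) 1 s := hasDerivAt_id s
    have h1 := (hid.pow 3).neg
    have h2 := (hid.const_mul (3:ℝ)).mul (hx.pow 2)
    have h3 := ((hx.pow 3).const_mul (3:ℝ)).mul hc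
    have h4 := (((hid.pow 2).const_mul (3:ℝ)).mul hx).mul hc
    have h5 := ((hid.pow 3).const_mul (2:ℝ)).mul (hc.pow 2)
    have H := (((h1.add h2).add h3).sub h4).sub h5
    have heq : (fun u : ℝ => -(u:ℝ)^3 + (3*u) * Real.sinh u ^ 2
        + (3 * Real.sinh u ^ 3) * Real.cosh u
        - ((3 * u ^ 2) * Real.sinh u) * Real.cosh u
        - (2 * u ^ 3) * Real.cosh u ^ 2)
        = (fun s : ℝ => -s ^ 3 + 3 * s * Real.sinh s ^ 2
        + 3 * Real.sinh s ^ 3 * Real.cosh s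
        - 3 * s ^ 2 * Real.sinh s * Real.cosh s
        - 2 * s ^ 3 * Real.cosh s ^ 2) := by funext u; ring
    have H : HasDerivAt (fun s : ℝ => -s ^ 3 + 3 * s * Real.sinh s ^ 2
        + 3 * Real.sinh s ^ 3 * Real.cosh s
        - 3 * s ^ 2 * Real.sinh s * Real.cosh s
        - 2 * s ^ 3 * Real.cosh s ^ 2) _ s := H
    convert H using 1
    simp only [Pi.pow_apply, Pi.mul_apply]
    push_cast
    have hcs := Real.cosh_sq s
    nlinarith [hcs, sq_nonneg (Real.sinh s ^ 2 - s ^ 2)]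
  have hpos : ∀ s : ℝ, 1 ≤ s →
      0 < 4 * Real.cosh s * (3 * Real.cosh s * (Real.sinh s ^ 2 - s ^ 2) - s ^ 3 * Real.sinh s) := by
    intro s hs
    have hs0 : (0:ℝ) ≤ s := by linarith
    have hsl := my_sinh_lb s hs0
    have hc := Real.cosh_pos s
    have hs3 : (0:ℝ) < s^3 := by positivity
    have hcx : Real.sinh s < Real.cosh s := by
      have h := Real.cosh_sub_sinh s
      nlinarith [Real.exp_pos (-s)]
    have hxs : s ≤ Real.sinh s := by nlinarith
    have h1 : s^4/3 ≤ Real.sinh s ^ 2 - s ^ 2 := by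
      have := mul_le_mul (show s^3/6 ≤ Real.sinh s - s by linarith)
        (show 2*s ≤ Real.sinh s + s by linarith) (by linarith) (by linarith)
      nlinarith [this]
    have h3 : Real.sinh s * s^3 < Real.cosh s * s^3 := by nlinarith
    have h4 : Real.cosh s * s^3 ≤ Real.cosh s * s^4 := by
      have hss : s^3 ≤ s^4 := by nlinarith
      nlinarith
    have h5 : Real.cosh s * s^4 ≤ 3 * Real.cosh s * (Real.sinh s ^ 2 - s ^ 2) := by
      have := mul_le_mul_of_nonneg_left h1 (show (0:ℝ) ≤ 3 * Real.cosh s by linarith)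
      nlinarith [this]
    have hinner : 0 < 3 * Real.cosh s * (Real.sinh s ^ 2 - s ^ 2) - s ^ 3 * Real.sinh s := by
      nlinarith [h3, h4, h5]
    positivity
  have hderiv : ∀ s : ℝ, 1 ≤ s → 0 < deriv (fun s : ℝ => -s ^ 3 + 3 * s * Real.sinh s ^ 2
      + 3 * Real.sinh s ^ 3 * Real.cosh s
      - 3 * s ^ 2 * Real.sinh s * Real.cosh s
      - 2 * s ^ 3 * Real.cosh s ^ 2) s := by
    intro s hs
    rw [(hD s).deriv]
    exact hpos s hs
  -- θ 1 > 0
  have hx1 : Real.sinh 1 = (Real.exp 1 - (Real.exp 1)⁻¹)/2 := by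
    rw [Real.sinh_eq, Real.exp_neg]
  have hc1 : Real.cosh 1 = (Real.exp 1 + (Real.exp 1)⁻¹)/2 := by
    rw [Real.cosh_eq, Real.exp_neg]
  have he1 := Real.exp_one_gt_d9
  have he2 := Real.exp_one_lt_d9
  have hepos := Real.exp_pos 1
  have hei : Real.exp 1 * (Real.exp 1)⁻¹ = 1 := mul_inv_cancel₀ (ne_of_gt hepos)
  have heipos : 0 < (Real.exp 1)⁻¹ := inv_pos.2 hepos
  have hxlb : (1.17:ℝ) < Real.sinh 1 := by rw [hx1]; nlinarith
  have hxub : Real.sinh 1 < 1.18 := by rw [hx1]; nlinarith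
  have hclb : (1.54:ℝ) < Real.cosh 1 := by rw [hc1]; nlinarith
  have hcub : Real.cosh 1 < 1.55 := by rw [hc1]; nlinarith
  have hθ1 : (0:ℝ) < -(1:ℝ) ^ 3 + 3 * 1 * Real.sinh 1 ^ 2
      + 3 * Real.sinh 1 ^ 3 * Real.cosh 1
      - 3 * (1:ℝ) ^ 2 * Real.sinh 1 * Real.cosh 1
      - 2 * (1:ℝ) ^ 3 * Real.cosh 1 ^ 2 := by
    have p1 : (1.3689:ℝ) < Real.sinh 1 ^ 2 := by nlinarith
    have hx3 : (1.601613:ℝ) < Real.sinh 1 ^ 3 := by nlinarith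
    have p3 : (2.46648:ℝ) < Real.sinh 1 ^ 3 * Real.cosh 1 := by
      nlinarith [mul_pos (sub_pos.2 hx3) (sub_pos.2 hclb)]
    have p4 : Real.sinh 1 * Real.cosh 1 < 1.83 := by nlinarith
    have p5 : Real.cosh 1 ^ 2 < 2.4025 := by nlinarith
    norm_num
    linarith [p1, p3, p4, p5]
  refine ⟨?_, hθ1, hderiv⟩
  -- nonnegativity
  have hmono : StrictMonoOn (fun s : ℝ => -s ^ 3 + 3 * s * Real.sinh s ^ 2
      + 3 * Real.sinh s ^ 3 * Real.cosh s
      - 3 * s ^ 2 * Real.sinh s * Real.cosh s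
      - 2 * s ^ 3 * Real.cosh s ^ 2) (Set.Ici (1:ℝ)) := by
    refine strictMonoOn_of_deriv_pos (convex_Ici 1) (Continuous.continuousOn (by fun_prop)) ?_
    intro s hs
    rw [interior_Ici] at hs
    exact hderiv s hs.le
  intro s hs
  rcases eq_or_lt_of_le hs with h | h
  · rw [← h]; exact hθ1.le
  · have h2 := hmono (Set.self_mem_Ici) (Set.mem_Ici.2 hs) h
    dsimp only at h2 ⊢
    linarith [hθ1, h2]
end

section
/- Define t : (0,∞) → ℝ by t(s) = 2s³·(sinh(s)·cosh(s) + s)/(sinh²(s) − s²). Then t is well defined for s > 0 (since sinh(s) > s for s > 0, so sinh²(s) − s² > 0) and t is strictly increasing on the interval [1, ∞), i.e., t'(s) > 0 for all s ≥ 1. -/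
open Real

private lemma nonneg_aux (f f' : ℝ → ℝ) (hf : ∀ x, HasDerivAt f (f' x) x)
    (h0 : f 0 = 0) (hf' : ∀ x, 0 ≤ x → 0 ≤ f' x) :
    ∀ x, 0 ≤ x → 0 ≤ f x := by
  intro x hx
  have hm : MonotoneOn f (Set.Ici 0) := by
    apply monotoneOn_of_deriv_nonneg (convex_Ici 0)
      (fun y _ => (hf y).continuousAt.continuousWithinAt)
      (fun y hy => (hf y).differentiableAt.differentiableWithinAt)
    intro y hy
    rw [(hf y).deriv]
    rw [interior_Ici] at hy
    exact hf' y (le_of_lt hy)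
  calc (0:ℝ) = f 0 := h0.symm
  _ ≤ f x := hm (by simp) (by simpa using hx) hx

private lemma pos_aux (f f' : ℝ → ℝ) (hf : ∀ x, HasDerivAt f (f' x) x)
    (h0 : f 0 = 0) (hf' : ∀ x, 0 < x → 0 < f' x) :
    ∀ x, 0 < x → 0 < f x := by
  intro x hx
  have hm : StrictMonoOn f (Set.Ici 0) := by
    apply strictMonoOn_of_deriv_pos (convex_Ici 0)
      (fun y _ => (hf y).continuousAt.continuousWithinAt)
    intro y hy
    rw [(hf y).deriv]
    rw [interior_Ici] at hy
    exact hf' y hy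
  calc (0:ℝ) = f 0 := h0.symm
  _ < f x := hm (by simp) (le_of_lt hx) hx

private lemma sinh_le_mul_cosh {x : ℝ} (hx : 0 ≤ x) : sinh x ≤ x * cosh x := by
  have h5 : 0 ≤ x * cosh x - sinh x :=
    nonneg_aux (fun y => y * cosh y - sinh y) (fun y => y * sinh y)
    (fun y => by
      have h := ((hasDerivAt_id y).mul (Real.hasDerivAt_cosh y)).sub (Real.hasDerivAt_sinh y)
      exact h.congr_deriv (by simp only [id_eq]; ring))
    (by simp)
    (fun y hy => mul_nonneg hy (Real.sinh_nonneg_iff.2 hy)) x hx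
  linarith

private lemma one_add_sq_le_cosh {x : ℝ} (hx : 0 ≤ x) : 1 + x ^ 2 / 2 ≤ cosh x := by
  have h5 : 0 ≤ cosh x - (1 + x ^ 2 / 2) :=
    nonneg_aux (fun y => cosh y - (1 + y ^ 2 / 2)) (fun y => sinh y - y)
    (fun y => by
      have h := (Real.hasDerivAt_cosh y).sub
        ((hasDerivAt_const y (1:ℝ)).add (((hasDerivAt_id y).pow 2).div_const 2))
      exact h.congr_deriv (by simp only [id_eq]; ring))
    (by simp)
    (fun y hy => by have := Real.self_le_sinh_iff.2 hy; linarith) x hx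
  linarith

private lemma cubic_le_sinh {x : ℝ} (hx : 0 ≤ x) : x + x ^ 3 / 6 ≤ sinh x := by
  have h5 : 0 ≤ sinh x - (x + x ^ 3 / 6) :=
    nonneg_aux (fun y => sinh y - (y + y ^ 3 / 6)) (fun y => cosh y - (1 + y ^ 2 / 2))
    (fun y => by
      have h := (Real.hasDerivAt_sinh y).sub
        ((hasDerivAt_id y).add (((hasDerivAt_id y).pow 3).div_const 6))
      exact h.congr_deriv (by simp only [id_eq]; ring))
    (by simp)
    (fun y hy => by have := one_add_sq_le_cosh hy; linarith) x hx
  linarith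

private lemma sinh_lt_mul_cosh {x : ℝ} (hx : 0 < x) : sinh x < x * cosh x := by
  have h5 : 0 < x * cosh x - sinh x :=
    pos_aux (fun y => y * cosh y - sinh y) (fun y => y * sinh y)
    (fun y => by
      have h := ((hasDerivAt_id y).mul (Real.hasDerivAt_cosh y)).sub (Real.hasDerivAt_sinh y)
      exact h.congr_deriv (by simp only [id_eq]; ring))
    (by simp)
    (fun y hy => mul_pos hy (Real.sinh_pos_iff.2 hy)) x hx
  linarith

/-- `(x²+3) sinh x > 3 x cosh x` for `x > 0`. -/
private lemma pade {x : ℝ} (hx : 0 < x) : 3 * x * cosh x < (x ^ 2 + 3) * sinh x := by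
  have h5 : 0 < (x ^ 2 + 3) * sinh x - 3 * x * cosh x :=
    pos_aux (fun y => (y ^ 2 + 3) * sinh y - 3 * y * cosh y)
    (fun y => y * (y * cosh y - sinh y))
    (fun y => by
      have h := ((((hasDerivAt_id y).pow 2).add_const 3).mul (Real.hasDerivAt_sinh y)).sub
        (((hasDerivAt_id y).const_mul 3).mul (Real.hasDerivAt_cosh y))
      exact h.congr_deriv (by simp only [id_eq, Pi.pow_apply]; ring))
    (by simp)
    (fun y hy => mul_pos hy (by have := sinh_lt_mul_cosh hy; linarith)) x hx
  linarith

/-- Lazarević's inequality. -/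
private lemma lazarevic {x : ℝ} (hx : 0 ≤ x) : x ^ 3 * cosh x ≤ sinh x ^ 3 := by
  have h5 : 0 ≤ sinh x ^ 3 - x ^ 3 * cosh x :=
    nonneg_aux (fun y => sinh y ^ 3 - y ^ 3 * cosh y)
    (fun y => 3 * sinh y ^ 2 * cosh y - 3 * y ^ 2 * cosh y - y ^ 3 * sinh y)
    (fun y => by
      have h := ((Real.hasDerivAt_sinh y).pow 3).sub
        (((hasDerivAt_id y).pow 3).mul (Real.hasDerivAt_cosh y))
      exact h.congr_deriv (by simp only [id_eq, Pi.pow_apply]; ring))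
    (by simp)
    (fun y hy => by
      have h1 := cubic_le_sinh hy
      have h2 := sinh_le_mul_cosh hy
      have hys : y ≤ sinh y := Real.self_le_sinh_iff.2 hy
      have h3 : 0 ≤ sinh y := Real.sinh_nonneg_iff.2 hy
      have h4 : 0 < cosh y := Real.cosh_pos y
      have e1 : y ^ 4 / 3 ≤ sinh y ^ 2 - y ^ 2 := by
        nlinarith [mul_le_mul (show y ^ 3 / 6 ≤ sinh y - y by linarith)
          (show 2 * y ≤ sinh y + y by linarith)
          (by linarith : (0:ℝ) ≤ 2 * y) (by linarith : (0:ℝ) ≤ sinh y - y)]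
      have e2 : y ^ 3 * sinh y ≤ y ^ 4 * cosh y := by
        nlinarith [mul_le_mul_of_nonneg_left h2 (pow_nonneg hy 3)]
      nlinarith [mul_le_mul_of_nonneg_left e1 (by positivity : (0:ℝ) ≤ 3 * cosh y)]) x hx
  linarith

/-- Positivity of the key expression. -/
private lemma keypos {s : ℝ} (hs : 0 < s) :
    0 < 3 * (sinh s * cosh s + s) * (sinh s ^ 2 - s ^ 2) - 2 * s ^ 3 * sinh s ^ 2 := by
  have hsh : 0 < sinh s := Real.sinh_pos_iff.2 hs
  have hch : 0 < cosh s := Real.cosh_pos s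
  have hlaz : s ^ 3 * cosh s ≤ sinh s ^ 3 := lazarevic hs.le
  have hpade : 3 * s * cosh s < (s ^ 2 + 3) * sinh s := pade hs
  have hc2 : cosh s ^ 2 = 1 + sinh s ^ 2 := by
    rw [Real.cosh_sq]; ring
  have h6 : s ^ 3 * (1 + sinh s ^ 2) ≤ sinh s ^ 3 * cosh s := by
    calc s ^ 3 * (1 + sinh s ^ 2) = s ^ 3 * cosh s ^ 2 := by rw [hc2]
    _ = s ^ 3 * cosh s * cosh s := by ring
    _ ≤ sinh s ^ 3 * cosh s := mul_le_mul_of_nonneg_right hlaz hch.le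
  nlinarith [h6, mul_pos (mul_pos hs hsh) (sub_pos.2 hpade)]

private lemma main_deriv (t : ℝ → ℝ)
    (ht : ∀ s : ℝ, 0 < s →
      t s = 2 * s ^ 3 * (Real.sinh s * Real.cosh s + s) / (Real.sinh s ^ 2 - s ^ 2))
    {s : ℝ} (hs : 0 < s) : ∃ d : ℝ, HasDerivAt t d s ∧ 0 < d := by
  have hsh := Real.self_lt_sinh_iff.2 hs
  have hD : 0 < Real.sinh s ^ 2 - s ^ 2 := by nlinarith
  have hD0 : Real.sinh s ^ 2 - s ^ 2 ≠ 0 := ne_of_gt hD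
  set sh := Real.sinh s with hshdef
  set ch := Real.cosh s with hchdef
  have hN : HasDerivAt (fun x => 2 * x ^ 3 * (Real.sinh x * Real.cosh x + x))
      (6 * s ^ 2 * (sh * ch + s) + 2 * s ^ 3 * (ch * ch + sh * sh + 1)) s := by
    have h1 : HasDerivAt (fun x : ℝ => 2 * x ^ 3) (2 * (3 * s ^ 2)) s :=
      (hasDerivAt_pow 3 s).const_mul 2 |>.congr_deriv (by ring)
    have h2 : HasDerivAt (fun x => Real.sinh x * Real.cosh x + x)
        (ch * ch + sh * sh + 1) s := by
      have h := ((Real.hasDerivAt_sinh s).mul (Real.hasDerivAt_cosh s)).add (hasDerivAt_id s)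
      exact h
    have := h1.mul h2
    exact this.congr_deriv (by ring)
  have hDd : HasDerivAt (fun x => Real.sinh x ^ 2 - x ^ 2) (2 * sh * ch - 2 * s) s := by
    have h := ((Real.hasDerivAt_sinh s).pow 2).sub (hasDerivAt_pow 2 s)
    exact h.congr_deriv (by simp [hshdef, hchdef])
  have hq := hN.div hDd hD0
  have heq : t =ᶠ[nhds s]
      fun x => 2 * x ^ 3 * (Real.sinh x * Real.cosh x + x) / (Real.sinh x ^ 2 - x ^ 2) :=
    Filter.eventuallyEq_of_mem (Ioi_mem_nhds hs) fun x hx => ht x hx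
  refine ⟨_, hq.congr_of_eventuallyEq heq, ?_⟩
  have hc2 : ch ^ 2 = 1 + sh ^ 2 := by rw [hchdef, Real.cosh_sq]; ring
  have hnum : (6 * s ^ 2 * (sh * ch + s) + 2 * s ^ 3 * (ch * ch + sh * sh + 1)) *
        (sh ^ 2 - s ^ 2) - 2 * s ^ 3 * (sh * ch + s) * (2 * sh * ch - 2 * s) =
      2 * s ^ 2 * (3 * (sh * ch + s) * (sh ^ 2 - s ^ 2) - 2 * s ^ 3 * sh ^ 2) := by
    linear_combination (-2 * s ^ 3 * (sh ^ 2 + s ^ 2)) * hc2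
  rw [hnum]
  have := keypos hs
  positivity

/-- The function `t(s) = 2s³ (sinh s cosh s + s)/(sinh² s − s²)` is well defined for
`s > 0` (since `sinh s > s`, hence `sinh² s − s² > 0`) and is strictly increasing on
`[1, ∞)`, with `t'(s) > 0` for every `s ≥ 1`. -/
theorem t_strictMono (t : ℝ → ℝ)
    (ht : ∀ s : ℝ, 0 < s →
      t s = 2 * s ^ 3 * (Real.sinh s * Real.cosh s + s) / (Real.sinh s ^ 2 - s ^ 2)) :
    (∀ s : ℝ, 0 < s → s < Real.sinh s ∧ 0 < Real.sinh s ^ 2 - s ^ 2) ∧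
    StrictMonoOn t (Set.Ici (1 : ℝ)) ∧
    (∀ s : ℝ, 1 ≤ s → 0 < deriv t s) := by
  refine ⟨fun s hs => ?_, ?_, fun s hs => ?_⟩
  · have h := Real.self_lt_sinh_iff.2 hs
    exact ⟨h, by nlinarith⟩
  · apply strictMonoOn_of_deriv_pos (convex_Ici 1)
    · intro x hx
      obtain ⟨d, hd, _⟩ := main_deriv t ht (lt_of_lt_of_le one_pos hx)
      exact hd.continuousAt.continuousWithinAt
    · intro x hx
      rw [interior_Ici] at hx
      obtain ⟨d, hd, hdpos⟩ := main_deriv t ht (lt_trans one_pos hx)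
      rwa [hd.deriv]
  · obtain ⟨d, hd, hdpos⟩ := main_deriv t ht (lt_of_lt_of_le one_pos hs)
    rwa [hd.deriv]
end

section
/- Let η > 0 and l > 0, and note sinh²(ηl) − η²l² > 0. Define Y : ℝ → ℝ by Y(s) = cosh(ηs) − [((sinh(ηl))(cosh(ηl)) + ηl)/(sinh²(ηl) − η²l²)]·sinh(ηs) + [(η(sinh(ηl))(cosh(ηl)) + η²l)/(sinh²(ηl) − η²l²)]·s·cosh(ηs) − [η·sinh²(ηl)/(sinh²(ηl) − η²l²)]·s·sinh(ηs). Then Y satisfies Y''''(s) − 2η²Y''(s) + η⁴Y(s) = 0 for all s, and moreover Y(0) = 1, Y(l) = 0, Y'(0) = 0, Y'(l) = 0, and Y'''(0) = 2η³·((sinh(ηl))(cosh(ηl)) + ηl)/(sinh²(ηl) − η²l²). -/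
noncomputable def gY (η a b c d : ℝ) : ℝ → ℝ :=
  fun s => a * Real.cosh (η * s) + b * Real.sinh (η * s)
    + c * (s * Real.cosh (η * s)) + d * (s * Real.sinh (η * s))

lemma hasDerivAt_gY (η a b c d s : ℝ) :
    HasDerivAt (gY η a b c d) (gY η (η * b + c) (η * a + d) (η * d) (η * c) s) s := by
  have hc : HasDerivAt (fun s : ℝ => Real.cosh (η * s)) (η * Real.sinh (η * s)) s := by
    have := (Real.hasDerivAt_cosh (η * s)).comp s ((hasDerivAt_id s).const_mul η)
    simpa [mul_comm, Function.comp_def] using this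
  have hs : HasDerivAt (fun s : ℝ => Real.sinh (η * s)) (η * Real.cosh (η * s)) s := by
    have := (Real.hasDerivAt_sinh (η * s)).comp s ((hasDerivAt_id s).const_mul η)
    simpa [mul_comm, Function.comp_def] using this
  have h1 := (hasDerivAt_id s).mul hc
  have h2 := (hasDerivAt_id s).mul hs
  have := (((hc.const_mul a).add (hs.const_mul b)).add (h1.const_mul c)).add (h2.const_mul d)
  refine this.congr_deriv ?_
  simp [gY]; ring

lemma deriv_gY (η a b c d : ℝ) :
    deriv (gY η a b c d) = gY η (η * b + c) (η * a + d) (η * d) (η * c) :=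
  funext fun s => (hasDerivAt_gY η a b c d s).deriv

/-- The explicit function `Y` built from `η, l > 0` solves `Y'''' − 2η² Y'' + η⁴ Y = 0`
with `Y(0) = 1`, `Y(l) = 0`, `Y'(0) = 0`, `Y'(l) = 0`, and
`Y'''(0) = 2η³ (sinh(ηl) cosh(ηl) + ηl)/(sinh²(ηl) − η²l²)`. -/
theorem explicit_Y_properties (η l : ℝ) (hη : 0 < η) (hl : 0 < l) (Y : ℝ → ℝ)
    (hY : ∀ s : ℝ, Y s =
      Real.cosh (η * s)
      - ((Real.sinh (η * l) * Real.cosh (η * l) + η * l) /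
          (Real.sinh (η * l) ^ 2 - η ^ 2 * l ^ 2)) * Real.sinh (η * s)
      + ((η * Real.sinh (η * l) * Real.cosh (η * l) + η ^ 2 * l) /
          (Real.sinh (η * l) ^ 2 - η ^ 2 * l ^ 2)) * s * Real.cosh (η * s)
      - ((η * Real.sinh (η * l) ^ 2) /
          (Real.sinh (η * l) ^ 2 - η ^ 2 * l ^ 2)) * s * Real.sinh (η * s)) :
    0 < Real.sinh (η * l) ^ 2 - η ^ 2 * l ^ 2 ∧
    (∀ s : ℝ,
      iteratedDeriv 4 Y s - 2 * η ^ 2 * iteratedDeriv 2 Y s + η ^ 4 * Y s = 0) ∧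
    Y 0 = 1 ∧ Y l = 0 ∧ deriv Y 0 = 0 ∧ deriv Y l = 0 ∧
    iteratedDeriv 3 Y 0 =
      2 * η ^ 3 * ((Real.sinh (η * l) * Real.cosh (η * l) + η * l) /
        (Real.sinh (η * l) ^ 2 - η ^ 2 * l ^ 2)) := by
  set D : ℝ := Real.sinh (η * l) ^ 2 - η ^ 2 * l ^ 2 with hD
  set A : ℝ := (Real.sinh (η * l) * Real.cosh (η * l) + η * l) / D with hA
  set B : ℝ := (η * Real.sinh (η * l) * Real.cosh (η * l) + η ^ 2 * l) / D with hB
  set C : ℝ := (η * Real.sinh (η * l) ^ 2) / D with hC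
  have hDpos : 0 < D := by
    have h1 : η * l < Real.sinh (η * l) := Real.self_lt_sinh_iff.2 (by positivity)
    have h2 : (η * l) ^ 2 < Real.sinh (η * l) ^ 2 :=
      pow_lt_pow_left₀ h1 (by positivity) (by norm_num)
    rw [hD]; nlinarith
  have hDne : D ≠ 0 := ne_of_gt hDpos
  have hYg : Y = gY η 1 (-A) B (-C) := funext fun s => by
    rw [hY]; simp only [gY]; ring
  have d1 : deriv Y = gY η (η * (-A) + B) (η * 1 + (-C)) (η * (-C)) (η * B) := by
    rw [hYg, deriv_gY]
  have d2 : iteratedDeriv 2 Y = gY η (η * (η * 1 + (-C)) + η * (-C)) (η * (η * (-A) + B) + η * B)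
      (η * (η * B)) (η * (η * (-C))) := by
    rw [iteratedDeriv_succ, iteratedDeriv_one, d1, deriv_gY]
  have d3 : iteratedDeriv 3 Y = gY η
      (η * (η * (η * (-A) + B) + η * B) + η * (η * B))
      (η * (η * (η * 1 + (-C)) + η * (-C)) + η * (η * (-C)))
      (η * (η * (η * (-C)))) (η * (η * (η * B))) := by
    rw [iteratedDeriv_succ, d2, deriv_gY]
  have d4 : iteratedDeriv 4 Y = gY η
      (η * (η * (η * (η * 1 + (-C)) + η * (-C)) + η * (η * (-C))) + η * (η * (η * (-C))))
      (η * (η * (η * (η * (-A) + B) + η * B) + η * (η * B)) + η * (η * (η * B)))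
      (η * (η * (η * (η * B)))) (η * (η * (η * (η * (-C))))) := by
    rw [iteratedDeriv_succ, d3, deriv_gY]
  have hcs := Real.cosh_sq (η * l)
  have hDne' : Real.sinh (η * l) ^ 2 - η ^ 2 * l ^ 2 ≠ 0 := hDne
  refine ⟨hDpos, ?_, ?_, ?_, ?_, ?_, ?_⟩
  · intro s
    rw [d4, d2, hYg]; simp only [gY]; ring
  · rw [hYg]; simp [gY]
  · rw [hYg]; simp only [gY]
    rw [hA, hB, hC, hD]
    field_simp [hDne']
    linear_combination (η * l * Real.sinh (η * l)) * hcs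
  · rw [d1]; simp [gY, hA, hB]
    field_simp
    ring
  · rw [d1]; simp only [gY]
    rw [hA, hB, hC, hD]
    field_simp [hDne']
    nlinarith [hcs]
  · rw [d3]; simp only [gY]
    rw [hA, hB, hC, hD]
    field_simp [hDne']
    simp only [mul_zero, Real.cosh_zero, Real.sinh_zero]
    ring
end

section
/- Let n ≥ 2, let l₁, …, lₙ > 0, and let m₁, …, m_{n−1} be positive integers. Set η = (Σ_{i=1}^{n−1} (m_iπ/l_i)²)^{1/2} and let Y : ℝ → ℝ be defined by Y(s) = cosh(ηs) − [((sinh(ηlₙ))(cosh(ηlₙ)) + ηlₙ)/(sinh²(ηlₙ) − η²lₙ²)]·sinh(ηs) + [(η(sinh(ηlₙ))(cosh(ηlₙ)) + η²lₙ)/(sinh²(ηlₙ) − η²lₙ²)]·s·cosh(ηs) − [η·sinh²(ηlₙ)/(sinh²(ηlₙ) − η²lₙ²)]·s·sinh(ηs). Define u : ℝⁿ → ℝ by u(x) = (Π_{i=1}^{n−1} sin(m_iπx_i/l_i))·Y(xₙ). Then: (i) Δ²u = 0 identically on ℝⁿ; (ii) ∂u/∂xₙ(x) = 0 whenever xₙ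 = 0; (iii) u(x) = 0 and ∂u/∂xₙ(x) = 0 whenever xₙ = lₙ; (iv) u(x) = 0 and Δu(x) = 0 whenever x_i ∈ {0, l_i} for some i ∈ {1, …, n−1}; and (v) for every x with xₙ = 0, ∂(Δu)/∂xₙ(x) = 2η³·[((sinh(ηlₙ))(cosh(ηlₙ)) + ηlₙ)/(sinh²(ηlₙ) − η²lₙ²)]·u(x). -/
/-- Partial derivative of `u : ℝⁿ → ℝ` in the `i`-th coordinate direction. -/
noncomputable def pd {n : ℕ} (i : Fin n) (u : (Fin n → ℝ) → ℝ) : (Fin n → ℝ) → ℝ :=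
  fun x => deriv (fun t => u (Function.update x i t)) (x i)

/-- Euclidean Laplacian `Δu = ∑ᵢ ∂²u/∂xᵢ²`. -/
noncomputable def lap {n : ℕ} (u : (Fin n → ℝ) → ℝ) : (Fin n → ℝ) → ℝ :=
  fun x => ∑ i : Fin n, pd i (pd i u) x

noncomputable def PF {n : ℕ} (G : Fin n → ℝ → ℝ) : (Fin n → ℝ) → ℝ :=
  fun x => ∏ i, G i (x i)

lemma PF_update {n : ℕ} (G : Fin n → ℝ → ℝ) (i : Fin n) (h : ℝ → ℝ) (x : Fin n → ℝ) :
    PF (Function.update G i h) x = h (x i) * ∏ j ∈ Finset.univ.erase i, G j (x j) := by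
  unfold PF
  rw [← Finset.mul_prod_erase _ _ (Finset.mem_univ i), Function.update_self]
  congr 1
  refine Finset.prod_congr rfl fun j hj => ?_
  rw [Function.update_of_ne (Finset.ne_of_mem_erase hj)]

lemma pd_PF {n : ℕ} (G : Fin n → ℝ → ℝ) (i : Fin n) :
    pd i (PF G) = PF (Function.update G i (deriv (G i))) := by
  funext x
  have h1 : ∀ t : ℝ, PF G (Function.update x i t)
      = G i t * ∏ j ∈ Finset.univ.erase i, G j (x j) := by
    intro t
    unfold PF
    rw [← Finset.mul_prod_erase _ _ (Finset.mem_univ i), Function.update_self]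
    congr 1
    refine Finset.prod_congr rfl fun j hj => ?_
    rw [Function.update_of_ne (Finset.ne_of_mem_erase hj)]
  rw [PF_update]
  unfold pd
  simp only [h1]
  exact deriv_mul_const_field _

lemma pd2_PF {n : ℕ} (G : Fin n → ℝ → ℝ) (i : Fin n) :
    pd i (pd i (PF G)) = PF (Function.update G i (deriv (deriv (G i)))) := by
  rw [pd_PF, pd_PF, Function.update_self, Function.update_idem]

noncomputable def Ffam (η a b p q : ℝ) : ℝ → ℝ := fun s =>
  a * Real.cosh (η * s) + b * Real.sinh (η * s)
    + p * (s * Real.cosh (η * s)) + q * (s * Real.sinh (η * s))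

lemma hasDerivAt_lin (η s : ℝ) : HasDerivAt (fun t : ℝ => η * t) η s := by
  simpa using (hasDerivAt_id s).const_mul η

lemma hasDerivAt_Ffam (η a b p q s : ℝ) :
    HasDerivAt (Ffam η a b p q) (Ffam η (b * η + p) (a * η + q) (q * η) (p * η) s) s := by
  have hc : HasDerivAt (fun t : ℝ => Real.cosh (η * t)) (Real.sinh (η * s) * η) s :=
    (Real.hasDerivAt_cosh (η * s)).comp s (hasDerivAt_lin η s)
  have hs : HasDerivAt (fun t : ℝ => Real.sinh (η * t)) (Real.cosh (η * s) * η) s :=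
    (Real.hasDerivAt_sinh (η * s)).comp s (hasDerivAt_lin η s)
  have h := (((hc.const_mul a).add (hs.const_mul b)).add
      (((hasDerivAt_id s).mul hc).const_mul p)).add
      (((hasDerivAt_id s).mul hs).const_mul q)
  refine h.congr_deriv ?_
  simp [Ffam]
  ring

lemma deriv_Ffam (η a b p q : ℝ) :
    deriv (Ffam η a b p q) = Ffam η (b * η + p) (a * η + q) (q * η) (p * η) :=
  funext fun s => (hasDerivAt_Ffam η a b p q s).deriv

lemma deriv2_sin (a : ℝ) :
    deriv (deriv (fun s => Real.sin (a * s))) = fun s => -(a ^ 2) * Real.sin (a * s) := by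
  have h1 : deriv (fun s => Real.sin (a * s)) = fun s => a * Real.cos (a * s) := by
    funext s
    have : HasDerivAt (fun t : ℝ => Real.sin (a * t)) (Real.cos (a * s) * a) s :=
      (Real.hasDerivAt_sin (a * s)).comp s (hasDerivAt_lin a s)
    rw [this.deriv]; ring
  rw [h1]
  funext s
  have : HasDerivAt (fun t : ℝ => a * Real.cos (a * t)) (a * (-Real.sin (a * s) * a)) s :=
    ((Real.hasDerivAt_cos (a * s)).comp s (hasDerivAt_lin a s)).const_mul a
  rw [this.deriv]; ring

lemma PF_snoc {k : ℕ} (S : Fin k → ℝ → ℝ) (W : ℝ → ℝ) (x : Fin (k + 1) → ℝ) :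
    PF (Fin.snoc S W) x = (∏ j : Fin k, S j (x j.castSucc)) * W (x (Fin.last k)) := by
  unfold PF
  rw [Fin.prod_univ_castSucc]
  simp [Fin.snoc_castSucc, Fin.snoc_last]

lemma prod_update_smul {k : ℕ} (S : Fin k → ℝ → ℝ) (j : Fin k) (a : ℝ) (v : Fin k → ℝ) :
    (∏ i : Fin k, (Function.update S j (fun s => a * S j s)) i (v i))
      = a * ∏ i : Fin k, S i (v i) := by
  have key : ∀ i : Fin k, (Function.update S j (fun s => a * S j s)) i (v i)
      = Function.update (fun i => S i (v i)) j (a * S j (v j)) i := by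
    intro i
    rcases eq_or_ne i j with rfl | h
    · simp
    · rw [Function.update_of_ne h, Function.update_of_ne h]
  simp only [key]
  rw [Finset.prod_update_of_mem (Finset.mem_univ j),
    ← Finset.mul_prod_erase Finset.univ (fun i => S i (v i)) (Finset.mem_univ j), ← mul_assoc]
  simp [Finset.sdiff_singleton_eq_erase]

lemma lapPF {k : ℕ} (c : Fin k → ℝ) (η : ℝ) (hη2 : η ^ 2 = ∑ j : Fin k, (c j) ^ 2)
    (W : ℝ → ℝ) (x : Fin (k + 1) → ℝ) :
    lap (PF (Fin.snoc (fun j s => Real.sin (c j * s)) W)) x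
      = PF (Fin.snoc (fun j s => Real.sin (c j * s))
          (fun s => deriv (deriv W) s - η ^ 2 * W s)) x := by
  set S : Fin k → ℝ → ℝ := fun j s => Real.sin (c j * s) with hS
  show (∑ i : Fin (k + 1), pd i (pd i (PF (Fin.snoc S W))) x) = _
  have hterm : ∀ i : Fin (k + 1),
      pd i (pd i (PF (Fin.snoc S W))) x
        = PF (Function.update (Fin.snoc S W) i
            (deriv (deriv ((Fin.snoc S W : Fin (k+1) → ℝ → ℝ) i)))) x := by
    intro i; rw [pd2_PF]
  simp only [hterm]
  rw [Fin.sum_univ_castSucc]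
  have hlat : ∀ j : Fin k,
      PF (Function.update (Fin.snoc S W) j.castSucc
          (deriv (deriv ((Fin.snoc S W : Fin (k+1) → ℝ → ℝ) j.castSucc)))) x
        = -(c j ^ 2) * PF (Fin.snoc S W) x := by
    intro j
    rw [show (Fin.snoc S W : Fin (k+1) → ℝ → ℝ) j.castSucc = S j from Fin.snoc_castSucc ..]
    rw [hS]
    rw [deriv2_sin (c j)]
    rw [← Fin.snoc_update, PF_snoc, PF_snoc]
    rw [show (fun s => -(c j ^ 2) * Real.sin (c j * s)) = fun s => -(c j ^ 2) * S j s from rfl]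
    rw [prod_update_smul]
    ring
  have hlast :
      PF (Function.update (Fin.snoc S W) (Fin.last k)
          (deriv (deriv ((Fin.snoc S W : Fin (k+1) → ℝ → ℝ) (Fin.last k))))) x
        = (∏ j : Fin k, S j (x j.castSucc)) * deriv (deriv W) (x (Fin.last k)) := by
    rw [show (Fin.snoc S W : Fin (k+1) → ℝ → ℝ) (Fin.last k) = W from Fin.snoc_last ..]
    rw [Fin.update_snoc_last, PF_snoc]
  simp only [hlat, hlast]
  rw [PF_snoc, PF_snoc]
  have : (∑ i : Fin k, -c i ^ 2) = -η ^ 2 := by rw [hη2]; exact Finset.sum_neg_distrib (f := fun i => c i ^ 2)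
  rw [← Finset.sum_mul, this]; ring

lemma pd_last_PF {k : ℕ} (S : Fin k → ℝ → ℝ) (W : ℝ → ℝ) :
    pd (Fin.last k) (PF (Fin.snoc S W)) = PF (Fin.snoc S (deriv W)) := by
  rw [pd_PF]
  simp only [Fin.snoc_last, Fin.update_snoc_last]

/-- The separated biharmonic functions
`u(x) = (∏ᵢ sin(mᵢπxᵢ/lᵢ)) Y(xₙ)` on the box `[0,l₁] × ⋯ × [0,l_{k+1}]`
(dimension `n = k+1 ≥ 2`, positive integers `m₁,…,m_k`) satisfy `Δ²u = 0`,
`∂u/∂xₙ = 0` on `{xₙ = 0}`, `u = ∂u/∂xₙ = 0` on `{xₙ = lₙ}`, `u = Δu = 0` on the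
lateral faces, and `∂(Δu)/∂xₙ = 2η³ ((sinh ηlₙ cosh ηlₙ + ηlₙ)/(sinh² ηlₙ − η²lₙ²)) u`
on `{xₙ = 0}`, where `η = (∑ᵢ (mᵢπ/lᵢ)²)^{1/2}`. -/
theorem biharmonic_steklov_eigenfunction_dirichlet_lateral
    (k : ℕ) (hk : 1 ≤ k) (l : Fin (k + 1) → ℝ) (hl : ∀ i, 0 < l i)
    (m : Fin k → ℕ) (hm : ∀ i, 1 ≤ m i)
    (η : ℝ)
    (hη : η = Real.sqrt (∑ i : Fin k, ((m i : ℝ) * Real.pi / l i.castSucc) ^ 2))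
    (Y : ℝ → ℝ)
    (hY : ∀ s : ℝ, Y s =
      Real.cosh (η * s)
      - ((Real.sinh (η * l (Fin.last k)) * Real.cosh (η * l (Fin.last k))
            + η * l (Fin.last k)) /
          (Real.sinh (η * l (Fin.last k)) ^ 2 - η ^ 2 * l (Fin.last k) ^ 2))
          * Real.sinh (η * s)
      + ((η * Real.sinh (η * l (Fin.last k)) * Real.cosh (η * l (Fin.last k))
            + η ^ 2 * l (Fin.last k)) /
          (Real.sinh (η * l (Fin.last k)) ^ 2 - η ^ 2 * l (Fin.last k) ^ 2))
          * s * Real.cosh (η * s)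
      - ((η * Real.sinh (η * l (Fin.last k)) ^ 2) /
          (Real.sinh (η * l (Fin.last k)) ^ 2 - η ^ 2 * l (Fin.last k) ^ 2))
          * s * Real.sinh (η * s))
    (u : (Fin (k + 1) → ℝ) → ℝ)
    (hu : ∀ x : Fin (k + 1) → ℝ, u x =
      (∏ i : Fin k,
        Real.sin ((m i : ℝ) * Real.pi * x i.castSucc / l i.castSucc)) *
      Y (x (Fin.last k))) :
    (∀ x : Fin (k + 1) → ℝ, lap (lap u) x = 0) ∧
    (∀ x : Fin (k + 1) → ℝ, x (Fin.last k) = 0 → pd (Fin.last k) u x = 0) ∧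
    (∀ x : Fin (k + 1) → ℝ, x (Fin.last k) = l (Fin.last k) →
      u x = 0 ∧ pd (Fin.last k) u x = 0) ∧
    (∀ (x : Fin (k + 1) → ℝ) (i : Fin k),
      (x i.castSucc = 0 ∨ x i.castSucc = l i.castSucc) → u x = 0 ∧ lap u x = 0) ∧
    (∀ x : Fin (k + 1) → ℝ, x (Fin.last k) = 0 →
      pd (Fin.last k) (lap u) x =
        2 * η ^ 3 *
          ((Real.sinh (η * l (Fin.last k)) * Real.cosh (η * l (Fin.last k))
              + η * l (Fin.last k)) /
            (Real.sinh (η * l (Fin.last k)) ^ 2 - η ^ 2 * l (Fin.last k) ^ 2)) *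
          u x) := by
  set L := l (Fin.last k) with hLdef
  set sh := Real.sinh (η * L) with hsh
  set ch := Real.cosh (η * L) with hch
  set D := sh ^ 2 - η ^ 2 * L ^ 2 with hD
  set A := (sh * ch + η * L) / D with hA
  set C := η * sh ^ 2 / D with hC
  -- positivity facts
  have hL0 : 0 < L := hl _
  have hη0 : 0 < η := by
    rw [hη]
    apply Real.sqrt_pos.mpr
    have : Nonempty (Fin k) := ⟨⟨0, hk⟩⟩
    apply Finset.sum_pos _ Finset.univ_nonempty
    intro i _
    have h1 : (0 : ℝ) < (m i : ℝ) := by exact_mod_cast hm i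
    have h2 := hl i.castSucc
    positivity
  have hsh1 : η * L < sh := by rw [hsh]; exact Real.self_lt_sinh_iff.mpr (by positivity)
  have hD0 : 0 < D := by
    rw [hD]
    nlinarith [hsh1, mul_pos hη0 hL0]
  have hDne : D ≠ 0 := ne_of_gt hD0
  have hch2 : ch ^ 2 - sh ^ 2 = 1 := by rw [hch, hsh]; exact Real.cosh_sq_sub_sinh_sq _
  -- structural setup
  have hη2 : η ^ 2 = ∑ j : Fin k, ((m j : ℝ) * Real.pi / l j.castSucc) ^ 2 := by
    rw [hη]; exact Real.sq_sqrt (Finset.sum_nonneg fun i _ => sq_nonneg _)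
  set S : Fin k → ℝ → ℝ := fun j s => Real.sin ((m j : ℝ) * Real.pi / l j.castSucc * s)
    with hSdef
  have huPF : u = PF (Fin.snoc S Y) := by
    funext x
    rw [hu, PF_snoc]
    congr 1
    refine Finset.prod_congr rfl fun i _ => ?_
    rw [hSdef]
    congr 1
    ring
  have hYF : Y = Ffam η 1 (-A) (η * A) (-C) := by
    funext s
    rw [hY s, hA, hC]
    simp only [Ffam]
    ring
  have hlap1 : lap (PF (Fin.snoc S Y))
      = PF (Fin.snoc S (fun s => deriv (deriv Y) s - η ^ 2 * Y s)) :=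
    funext fun x => lapPF (fun j => (m j : ℝ) * Real.pi / l j.castSucc) η hη2 Y x
  have hZF : (fun s => deriv (deriv Y) s - η ^ 2 * Y s)
      = Ffam η (-(2 * C * η)) (2 * η ^ 2 * A) 0 0 := by
    rw [hYF, deriv_Ffam, deriv_Ffam]
    funext s
    simp only [Ffam]
    ring
  have hlap2 : lap (PF (Fin.snoc S (fun s => deriv (deriv Y) s - η ^ 2 * Y s)))
      = PF (Fin.snoc S (fun s =>
          deriv (deriv (fun t => deriv (deriv Y) t - η ^ 2 * Y t)) s
            - η ^ 2 * (deriv (deriv Y) s - η ^ 2 * Y s))) :=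
    funext fun x => lapPF (fun j => (m j : ℝ) * Real.pi / l j.castSucc) η hη2 _ x
  have hZ2 : ∀ t : ℝ,
      deriv (deriv (fun t => deriv (deriv Y) t - η ^ 2 * Y t)) t
        - η ^ 2 * (deriv (deriv Y) t - η ^ 2 * Y t) = 0 := by
    intro t
    have hZs : deriv (deriv Y) t - η ^ 2 * Y t
        = Ffam η (-(2 * C * η)) (2 * η ^ 2 * A) 0 0 t := congrFun hZF t
    rw [hZF, deriv_Ffam, deriv_Ffam, hZs]
    simp only [Ffam]
    ring
  have hY'0 : deriv Y 0 = 0 := by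
    rw [hYF, deriv_Ffam]
    simp [Ffam]
    ring
  have hY0 : Y 0 = 1 := by
    rw [hYF]
    simp [Ffam]
  have hYL : Y L = 0 := by
    rw [hYF]
    simp only [Ffam]
    rw [hA, hC]
    rw [← hsh, ← hch]
    field_simp
    rw [hD]
    linear_combination (η * L * sh) * hch2
  have hY'L : deriv Y L = 0 := by
    rw [hYF, deriv_Ffam]
    simp only [Ffam]
    rw [hA, hC]
    rw [← hsh, ← hch]
    field_simp
    rw [hD]
    ring
  have hZ'0 : deriv (fun s => deriv (deriv Y) s - η ^ 2 * Y s) 0 = 2 * η ^ 3 * A := by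
    rw [hZF, deriv_Ffam]
    simp [Ffam]
    ring
  refine ⟨?_, ?_, ?_, ?_, ?_⟩
  · intro x
    rw [huPF, hlap1, hlap2, PF_snoc, hZ2, mul_zero]
  · intro x hx
    rw [huPF, pd_last_PF, PF_snoc, hx, hY'0, mul_zero]
  · intro x hx
    constructor
    · rw [huPF, PF_snoc, hx, hYL, mul_zero]
    · rw [huPF, pd_last_PF, PF_snoc, hx, hY'L, mul_zero]
  · intro x i hi
    have h0 : S i (x i.castSucc) = 0 := by
      rw [hSdef]
      rcases hi with hx | hx
      · rw [hx]; simp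
      · rw [hx]
        have hlne : l i.castSucc ≠ 0 := (hl i.castSucc).ne'
        show Real.sin ((m i : ℝ) * Real.pi / l i.castSucc * l i.castSucc) = 0
        rw [div_mul_cancel₀ _ hlne]
        exact Real.sin_nat_mul_pi _
    have hprod : (∏ j : Fin k, S j (x j.castSucc)) = 0 :=
      Finset.prod_eq_zero (Finset.mem_univ i) h0
    constructor
    · rw [huPF, PF_snoc, hprod, zero_mul]
    · rw [huPF, hlap1, PF_snoc, hprod, zero_mul]
  · intro x hx
    rw [huPF, hlap1, pd_last_PF, PF_snoc, PF_snoc, hx, hZ'0, hY0, mul_one]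
    ring
end

section
/- Let n ≥ 2, let l₁, …, lₙ > 0, and let m₁, …, m_{n−1} be nonnegative integers with Σ_{i=1}^{n−1} m_i ≥ 1. Set β = (Σ_{i=1}^{n−1} (m_iπ/l_i)²)^{1/2} and let Z : ℝ → ℝ be defined by Z(s) = cosh(βs) − [((sinh(βlₙ))(cosh(βlₙ)) + βlₙ)/(sinh²(βlₙ) − β²lₙ²)]·sinh(βs) + [(β(sinh(βlₙ))(cosh(βlₙ)) + β²lₙ)/(sinh²(βlₙ) − β²lₙ²)]·s·cosh(βs) − [β·sinh²(βlₙ)/(sinh²(βlₙ) − β²lₙ²)]·s·sinh(βs). Define u : ℝⁿ → ℝ by u(x) = (Π_{i=1}^{n−1} cos(m_iπx_i/l_i))·Z(xₙ). Then: (i) Δ²u = 0 identically on ℝⁿ; (ii) ∂u/∂xₙ(x) = 0 whenever xₙ = 0; (iii) u(x) = 0 and ∂u/∂xₙ(x) = 0 whenever xₙ = lₙ; (iv) ∂u/∂x_i(x) = 0 and ∂(Δu)/∂x_i(x) = 0 whenever x_i ∈ {0, l_i} for some i ∈ {1, …, n−1}; and (v) for every x with xₙ = 0, ∂(Δu)/∂xₙ(x)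 = 2β³·[((sinh(βlₙ))(cosh(βlₙ)) + βlₙ)/(sinh²(βlₙ) − β²lₙ²)]·u(x). -/
open Real Finset

/-! ### Single-variable calculus lemmas -/

lemma hasDerivAt_cosh_mul (β s : ℝ) :
    HasDerivAt (fun s => Real.cosh (β * s)) (β * Real.sinh (β * s)) s := by
  have h1 : HasDerivAt (fun x : ℝ => β * x) β s := by
    simpa using (hasDerivAt_id s).const_mul β
  simpa [Function.comp_def, mul_comm] using (Real.hasDerivAt_cosh (β * s)).comp s h1

lemma hasDerivAt_sinh_mul (β s : ℝ) :
    HasDerivAt (fun s => Real.sinh (β * s)) (β * Real.cosh (β * s)) s := by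
  have h1 : HasDerivAt (fun x : ℝ => β * x) β s := by
    simpa using (hasDerivAt_id s).const_mul β
  simpa [Function.comp_def, mul_comm] using (Real.hasDerivAt_sinh (β * s)).comp s h1

/-- Building block: `a cosh(βs) + b sinh(βs) + p s cosh(βs) + q s sinh(βs)`. -/
noncomputable def lin4 (β a b p q : ℝ) : ℝ → ℝ := fun s =>
  a * Real.cosh (β * s) + b * Real.sinh (β * s)
    + p * (s * Real.cosh (β * s)) + q * (s * Real.sinh (β * s))

lemma hasDerivAt_lin4 (β a b p q s : ℝ) :
    HasDerivAt (lin4 β a b p q) (lin4 β (b * β + p) (a * β + q) (q * β) (p * β) s) s := by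
  have hc := hasDerivAt_cosh_mul β s
  have hs := hasDerivAt_sinh_mul β s
  have h1 := hc.const_mul a
  have h2 := hs.const_mul b
  have h3 := ((hasDerivAt_id' s).mul hc).const_mul p
  have h4 := ((hasDerivAt_id' s).mul hs).const_mul q
  have h := ((h1.add h2).add h3).add h4
  refine h.congr_deriv ?_
  simp only [lin4]; ring

lemma deriv_lin4 (β a b p q : ℝ) :
    deriv (lin4 β a b p q) = lin4 β (b * β + p) (a * β + q) (q * β) (p * β) :=
  funext fun s => (hasDerivAt_lin4 β a b p q s).deriv

lemma differentiable_lin4 (β a b p q : ℝ) : Differentiable ℝ (lin4 β a b p q) :=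
  fun s => (hasDerivAt_lin4 β a b p q s).differentiableAt

lemma lin4_zero (β a b p q : ℝ) : lin4 β a b p q 0 = a := by
  simp [lin4]

/-- The cosine factor. -/
noncomputable def cf (c : ℝ) : ℝ → ℝ := fun t => Real.cos (c * t)

lemma hasDerivAt_cf (c t : ℝ) : HasDerivAt (cf c) (-(c * Real.sin (c * t))) t := by
  have h1 : HasDerivAt (fun x : ℝ => c * x) c t := by
    simpa using (hasDerivAt_id t).const_mul c
  have := (Real.hasDerivAt_cos (c * t)).comp t h1
  exact this.congr_deriv (by ring)

lemma deriv_cf (c : ℝ) : deriv (cf c) = fun t => -(c * Real.sin (c * t)) :=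
  funext fun t => (hasDerivAt_cf c t).deriv

lemma differentiable_cf (c : ℝ) : Differentiable ℝ (cf c) :=
  fun t => (hasDerivAt_cf c t).differentiableAt

lemma hasDerivAt_cf' (c t : ℝ) :
    HasDerivAt (fun t => -(c * Real.sin (c * t))) (-(c ^ 2) * cf c t) t := by
  have h1 : HasDerivAt (fun x : ℝ => c * x) c t := by
    simpa using (hasDerivAt_id t).const_mul c
  have h2 := (Real.hasDerivAt_sin (c * t)).comp t h1
  have := (h2.const_mul c).neg
  refine this.congr_deriv ?_
  simp only [cf]; ring

lemma deriv2_cf (c : ℝ) : deriv (deriv (cf c)) = fun t => -(c ^ 2) * cf c t := by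
  rw [deriv_cf]
  exact funext fun t => (hasDerivAt_cf' c t).deriv

lemma differentiable_deriv_cf (c : ℝ) : Differentiable ℝ (deriv (cf c)) := by
  rw [deriv_cf]; exact fun t => (hasDerivAt_cf' c t).differentiableAt

/-! ### Product structure lemmas -/

/-- Non-dependent `Fin.snoc`. -/
def snocFun {k : ℕ} {γ : Type*} (F : Fin k → γ) (Z : γ) : Fin (k + 1) → γ :=
  Fin.snoc F Z

@[simp] lemma snocFun_castSucc {k : ℕ} {γ : Type*} (F : Fin k → γ) (Z : γ) (i : Fin k) :
    snocFun F Z i.castSucc = F i := by simp [snocFun]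

@[simp] lemma snocFun_last {k : ℕ} {γ : Type*} (F : Fin k → γ) (Z : γ) :
    snocFun F Z (Fin.last k) = Z := by simp [snocFun]

lemma update_comp_eval {n : ℕ} {α γ : Type*} (g : Fin n → α → γ) (j : Fin n)
    (h : α → γ) (v : Fin n → α) :
    (fun i => Function.update g j h i (v i))
      = Function.update (fun i => g i (v i)) j (h (v j)) := by
  funext i
  rcases eq_or_ne i j with rfl | hij
  · simp
  · simp [Function.update_of_ne hij]

lemma pd_pi {n : ℕ} (g : Fin n → ℝ → ℝ) (hg : ∀ i, Differentiable ℝ (g i)) (j : Fin n) :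
    pd j (fun y => ∏ i, g i (y i))
      = fun x => ∏ i, Function.update g j (deriv (g j)) i (x i) := by
  funext x
  have key2 : ∀ t : ℝ, (fun i => g i (Function.update x j t i))
      = Function.update (fun i => g i (x i)) j (g j t) := by
    intro t; funext i
    rcases eq_or_ne i j with rfl | hij
    · simp
    · simp [Function.update_of_ne hij]
  show deriv (fun t => ∏ i, g i (Function.update x j t i)) (x j) = _
  have e1 : (fun t => ∏ i, g i (Function.update x j t i))
      = fun t => g j t * ∏ i ∈ Finset.univ \ {j}, g i (x i) := by
    funext t
    rw [key2 t]
    exact Finset.prod_update_of_mem (Finset.mem_univ j) _ _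
  have e2 : (∏ i, Function.update g j (deriv (g j)) i (x i))
      = deriv (g j) (x j) * ∏ i ∈ Finset.univ \ {j}, g i (x i) := by
    rw [update_comp_eval g j (deriv (g j)) x]
    exact Finset.prod_update_of_mem (Finset.mem_univ j) _ _
  rw [e1, e2, deriv_mul_const ((hg j).differentiableAt)]

lemma update_snocFun_last {k : ℕ} {γ : Type*} (F : Fin k → γ) (Z h : γ) :
    Function.update (snocFun F Z) (Fin.last k) h = snocFun F h := by
  funext j
  induction j using Fin.lastCases with
  | last => simp
  | cast j => simp [Function.update_of_ne (Fin.castSucc_lt_last j).ne]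

lemma update_snocFun_castSucc {k : ℕ} {γ : Type*} (F : Fin k → γ) (Z : γ) (i : Fin k) (h : γ) :
    Function.update (snocFun F Z) i.castSucc h = snocFun (Function.update F i h) Z := by
  funext j
  induction j using Fin.lastCases with
  | last => simp [Function.update_of_ne (Fin.castSucc_lt_last i).ne']
  | cast j =>
    rcases eq_or_ne j i with rfl | hji
    · simp
    · simp [Function.update_of_ne (by simpa using hji : j.castSucc ≠ i.castSucc),
        Function.update_of_ne hji]

lemma prod_snocFun_eval {k : ℕ} (F : Fin k → ℝ → ℝ) (Z : ℝ → ℝ) (x : Fin (k + 1) → ℝ) :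
    (∏ j, snocFun F Z j (x j))
      = (∏ i : Fin k, F i (x i.castSucc)) * Z (x (Fin.last k)) := by
  rw [Fin.prod_univ_castSucc]
  simp

lemma lap_snoc {k : ℕ} (c : Fin k → ℝ) (F : Fin k → ℝ → ℝ) (Z W : ℝ → ℝ)
    (hF : ∀ i, Differentiable ℝ (F i)) (hF' : ∀ i, Differentiable ℝ (deriv (F i)))
    (hF2 : ∀ i, deriv (deriv (F i)) = fun t => -(c i) ^ 2 * F i t)
    (hZd : Differentiable ℝ Z) (hZd' : Differentiable ℝ (deriv Z))
    (hZ2 : deriv (deriv Z) = fun t => (∑ i, (c i) ^ 2) * Z t + W t) :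
    lap (fun y : Fin (k + 1) → ℝ => ∏ j, snocFun F Z j (y j))
      = fun y => ∏ j, snocFun F W j (y j) := by
  funext x
  have hgd : ∀ i, Differentiable ℝ (snocFun F Z i) := by
    intro i
    induction i using Fin.lastCases with
    | last => simpa using hZd
    | cast i => simpa using hF i
  have hgd' : ∀ i, Differentiable ℝ (deriv (snocFun F Z i)) := by
    intro i
    induction i using Fin.lastCases with
    | last => simpa using hZd'
    | cast i => simpa using hF' i
  have hstep : ∀ j, pd j (pd j (fun y => ∏ i, snocFun F Z i (y i))) x
      = ∏ i, Function.update (snocFun F Z) j (deriv (deriv (snocFun F Z j))) i (x i) := by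
    intro j
    rw [pd_pi _ hgd j]
    have hupd : ∀ i, Differentiable ℝ
        (Function.update (snocFun F Z) j (deriv (snocFun F Z j)) i) := by
      intro i
      rcases eq_or_ne i j with rfl | hij
      · simpa using hgd' i
      · simpa [Function.update_of_ne hij] using hgd i
    rw [pd_pi _ hupd j]
    rw [Function.update_self, Function.update_idem]
  unfold lap
  rw [Finset.sum_congr rfl fun j _ => hstep j]
  rw [Fin.sum_univ_castSucc]
  have hlastterm :
      (∏ i, Function.update (snocFun F Z) (Fin.last k)
        (deriv (deriv (snocFun F Z (Fin.last k)))) i (x i))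
      = (∏ i : Fin k, F i (x i.castSucc))
          * ((∑ i, (c i) ^ 2) * Z (x (Fin.last k)) + W (x (Fin.last k))) := by
    rw [show deriv (deriv (snocFun F Z (Fin.last k)))
        = fun t => (∑ i, (c i) ^ 2) * Z t + W t by rw [snocFun_last]; exact hZ2]
    rw [update_snocFun_last, prod_snocFun_eval]
  have hcastterm : ∀ i : Fin k,
      (∏ j, Function.update (snocFun F Z) i.castSucc
        (deriv (deriv (snocFun F Z i.castSucc))) j (x j))
      = -(c i) ^ 2 * ((∏ i' : Fin k, F i' (x i'.castSucc)) * Z (x (Fin.last k))) := by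
    intro i
    rw [show deriv (deriv (snocFun F Z i.castSucc))
        = fun t => -(c i) ^ 2 * F i t by rw [snocFun_castSucc]; exact hF2 i]
    rw [update_snocFun_castSucc, prod_snocFun_eval]
    have e3 : (∏ i' : Fin k,
        Function.update F i (fun t => -(c i) ^ 2 * F i t) i' (x i'.castSucc))
        = -(c i) ^ 2 * ∏ i' : Fin k, F i' (x i'.castSucc) := by
      rw [update_comp_eval F i (fun t => -(c i) ^ 2 * F i t) (fun i' : Fin k => x i'.castSucc)]
      rw [Finset.prod_update_of_mem (Finset.mem_univ i)]
      have hm := Finset.mul_prod_erase Finset.univ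
        (fun i' : Fin k => F i' (x i'.castSucc)) (Finset.mem_univ i)
      rw [mul_assoc, ← Finset.erase_eq, hm]
    rw [e3]; ring
  rw [Finset.sum_congr rfl fun i _ => hcastterm i, hlastterm]
  rw [← Finset.sum_mul, prod_snocFun_eval]
  have hneg : ∑ i : Fin k, -(c i) ^ 2 = -∑ i : Fin k, (c i) ^ 2 := by
    simp
  rw [hneg]; ring

/-- The separated biharmonic functions
`u(x) = (∏ᵢ cos(mᵢπxᵢ/lᵢ)) Z(xₙ)` on the box `[0,l₁] × ⋯ × [0,l_{k+1}]`
(dimension `n = k+1 ≥ 2`, nonnegative integers `m₁,…,m_k` not all zero) satisfy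
`Δ²u = 0`, `∂u/∂xₙ = 0` on `{xₙ = 0}`, `u = ∂u/∂xₙ = 0` on `{xₙ = lₙ}`,
`∂u/∂xᵢ = ∂(Δu)/∂xᵢ = 0` on the lateral faces, and
`∂(Δu)/∂xₙ = 2β³ ((sinh βlₙ cosh βlₙ + βlₙ)/(sinh² βlₙ − β²lₙ²)) u` on `{xₙ = 0}`,
where `β = (∑ᵢ (mᵢπ/lᵢ)²)^{1/2}`. -/
theorem biharmonic_steklov_eigenfunction_neumann_lateral
    (k : ℕ) (hk : 1 ≤ k) (l : Fin (k + 1) → ℝ) (hl : ∀ i, 0 < l i)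
    (m : Fin k → ℕ) (hm : 1 ≤ ∑ i : Fin k, m i)
    (β : ℝ)
    (hβ : β = Real.sqrt (∑ i : Fin k, ((m i : ℝ) * Real.pi / l i.castSucc) ^ 2))
    (Z : ℝ → ℝ)
    (hZ : ∀ s : ℝ, Z s =
      Real.cosh (β * s)
      - ((Real.sinh (β * l (Fin.last k)) * Real.cosh (β * l (Fin.last k))
            + β * l (Fin.last k)) /
          (Real.sinh (β * l (Fin.last k)) ^ 2 - β ^ 2 * l (Fin.last k) ^ 2))
          * Real.sinh (β * s)
      + ((β * Real.sinh (β * l (Fin.last k)) * Real.cosh (β * l (Fin.last k))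
            + β ^ 2 * l (Fin.last k)) /
          (Real.sinh (β * l (Fin.last k)) ^ 2 - β ^ 2 * l (Fin.last k) ^ 2))
          * s * Real.cosh (β * s)
      - ((β * Real.sinh (β * l (Fin.last k)) ^ 2) /
          (Real.sinh (β * l (Fin.last k)) ^ 2 - β ^ 2 * l (Fin.last k) ^ 2))
          * s * Real.sinh (β * s))
    (u : (Fin (k + 1) → ℝ) → ℝ)
    (hu : ∀ x : Fin (k + 1) → ℝ, u x =
      (∏ i : Fin k,
        Real.cos ((m i : ℝ) * Real.pi * x i.castSucc / l i.castSucc)) *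
      Z (x (Fin.last k))) :
    (∀ x : Fin (k + 1) → ℝ, lap (lap u) x = 0) ∧
    (∀ x : Fin (k + 1) → ℝ, x (Fin.last k) = 0 → pd (Fin.last k) u x = 0) ∧
    (∀ x : Fin (k + 1) → ℝ, x (Fin.last k) = l (Fin.last k) →
      u x = 0 ∧ pd (Fin.last k) u x = 0) ∧
    (∀ (x : Fin (k + 1) → ℝ) (i : Fin k),
      (x i.castSucc = 0 ∨ x i.castSucc = l i.castSucc) →
        pd i.castSucc u x = 0 ∧ pd i.castSucc (lap u) x = 0) ∧
    (∀ x : Fin (k + 1) → ℝ, x (Fin.last k) = 0 →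
      pd (Fin.last k) (lap u) x =
        2 * β ^ 3 *
          ((Real.sinh (β * l (Fin.last k)) * Real.cosh (β * l (Fin.last k))
              + β * l (Fin.last k)) /
            (Real.sinh (β * l (Fin.last k)) ^ 2 - β ^ 2 * l (Fin.last k) ^ 2)) *
          u x) := by
  set L := l (Fin.last k) with hLdef
  set sh := Real.sinh (β * L) with hsh
  set ch := Real.cosh (β * L) with hch
  set D := sh ^ 2 - β ^ 2 * L ^ 2 with hD0
  set A := (sh * ch + β * L) / D with hA
  set Bc := (β * sh * ch + β ^ 2 * L) / D with hB
  set Cc := (β * sh ^ 2) / D with hC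
  set c : Fin k → ℝ := fun i => (m i : ℝ) * Real.pi / l i.castSucc with hc
  set F : Fin k → ℝ → ℝ := fun i => cf (c i) with hF0
  set Wf : ℝ → ℝ := lin4 β (-(2 * Cc * β)) (2 * Bc * β) 0 0 with hW
  -- basic positivity facts
  have hβ' : β = Real.sqrt (∑ i, c i ^ 2) := by simp only [hc]; exact hβ
  have hsum0 : 0 ≤ ∑ i, c i ^ 2 := Finset.sum_nonneg fun i _ => sq_nonneg _
  have hβ2 : β ^ 2 = ∑ i, c i ^ 2 := by rw [hβ']; exact Real.sq_sqrt hsum0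
  have hβpos : 0 < β := by
    obtain ⟨i0, hi0⟩ : ∃ i, m i ≠ 0 := by
      by_contra h
      push_neg at h
      rw [Finset.sum_eq_zero (fun i _ => h i)] at hm
      omega
    have hci0 : 0 < c i0 := by
      rw [hc]
      exact div_pos (mul_pos (by exact_mod_cast Nat.pos_of_ne_zero hi0) Real.pi_pos)
        (hl i0.castSucc)
    rw [hβ']
    apply Real.sqrt_pos.mpr
    exact lt_of_lt_of_le (pow_pos hci0 2)
      (Finset.single_le_sum (fun i _ => sq_nonneg (c i)) (Finset.mem_univ i0))
  have hLpos : 0 < L := hl _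
  have hDpos : 0 < D := by
    rw [hD0]
    have h1 : β * L < sh := by
      rw [hsh]
      exact Real.self_lt_sinh_iff.mpr (mul_pos hβpos hLpos)
    nlinarith [mul_pos hβpos hLpos]
  have hD : D ≠ 0 := ne_of_gt hDpos
  have hid : ch ^ 2 = sh ^ 2 + 1 := by rw [hsh, hch]; exact Real.cosh_sq (β * L)
  -- structure of Z, W
  have hZfun : Z = lin4 β 1 (-A) Bc (-Cc) := by
    funext s; rw [hZ s]; simp only [lin4]; ring
  have hZd : Differentiable ℝ Z := by rw [hZfun]; exact differentiable_lin4 _ _ _ _ _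
  have hZd' : Differentiable ℝ (deriv Z) := by
    rw [hZfun, deriv_lin4]; exact differentiable_lin4 _ _ _ _ _
  have hZ2 : deriv (deriv Z) = fun t => (∑ i, c i ^ 2) * Z t + Wf t := by
    rw [hZfun, deriv_lin4, deriv_lin4, hW]
    funext t
    rw [← hβ2]
    simp only [lin4]
    ring
  have hWd : Differentiable ℝ Wf := by rw [hW]; exact differentiable_lin4 _ _ _ _ _
  have hWd' : Differentiable ℝ (deriv Wf) := by
    rw [hW, deriv_lin4]; exact differentiable_lin4 _ _ _ _ _
  have hW2 : deriv (deriv Wf) = fun t => (∑ i, c i ^ 2) * Wf t + (fun _ => (0 : ℝ)) t := by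
    rw [hW, deriv_lin4, deriv_lin4]
    funext t
    rw [← hβ2]
    simp only [lin4]
    ring
  -- F facts
  have hF1 : ∀ i, Differentiable ℝ (F i) := by
    intro i; simp only [hF0]; exact differentiable_cf _
  have hF1' : ∀ i, Differentiable ℝ (deriv (F i)) := by
    intro i; simp only [hF0]; exact differentiable_deriv_cf _
  have hF2 : ∀ i, deriv (deriv (F i)) = fun t => -(c i) ^ 2 * F i t := by
    intro i; simp only [hF0]; exact deriv2_cf _
  have hgdZ : ∀ i, Differentiable ℝ (snocFun F Z i) := by
    intro i
    induction i using Fin.lastCases with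
    | last => simpa using hZd
    | cast i => simpa using hF1 i
  have hgdW : ∀ i, Differentiable ℝ (snocFun F Wf i) := by
    intro i
    induction i using Fin.lastCases with
    | last => simpa using hWd
    | cast i => simpa using hF1 i
  -- product representation
  have hu2 : u = fun y => ∏ j, snocFun F Z j (y j) := by
    funext x
    rw [hu x, prod_snocFun_eval]
    congr 1
    apply Finset.prod_congr rfl
    intro i _
    simp only [hF0, cf, hc]
    congr 1
    ring
  have hlapu : lap u = fun y => ∏ j, snocFun F Wf j (y j) := by
    rw [hu2]; exact lap_snoc c F Z Wf hF1 hF1' hF2 hZd hZd' hZ2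
  have hlap2 : lap (lap u) = fun y => ∏ j, snocFun F (fun _ => (0 : ℝ)) j (y j) := by
    rw [hlapu]; exact lap_snoc c F Wf (fun _ => (0 : ℝ)) hF1 hF1' hF2 hWd hWd' hW2
  refine ⟨?_, ?_, ?_, ?_, ?_⟩
  · -- (i)
    intro x
    rw [hlap2]
    simp [prod_snocFun_eval]
  · -- (ii)
    intro x hx
    rw [hu2, pd_pi _ hgdZ (Fin.last k)]
    show (∏ i, Function.update (snocFun F Z) (Fin.last k)
      (deriv (snocFun F Z (Fin.last k))) i (x i)) = 0
    simp only [snocFun_last]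
    rw [update_snocFun_last, prod_snocFun_eval, hx]
    rw [hZfun, deriv_lin4, lin4_zero]
    have h0 : -A * β + Bc = 0 := by
      rw [hA, hB]; field_simp; ring
    rw [h0, mul_zero]
  · -- (iii)
    intro x hx
    constructor
    · rw [hu2]
      show (∏ j, snocFun F Z j (x j)) = 0
      rw [prod_snocFun_eval, hx]
      have hZL : Z L = 0 := by
        rw [hZfun]
        simp only [lin4]
        rw [← hsh, ← hch, hA, hB, hC]
        field_simp
        linear_combination (sh * β * L) * hid
      rw [hZL, mul_zero]
    · rw [hu2, pd_pi _ hgdZ (Fin.last k)]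
      show (∏ i, Function.update (snocFun F Z) (Fin.last k)
        (deriv (snocFun F Z (Fin.last k))) i (x i)) = 0
      simp only [snocFun_last]
      rw [update_snocFun_last, prod_snocFun_eval, hx]
      have hZ'L : lin4 β (-A * β + Bc) (1 * β + -Cc) (-Cc * β) (Bc * β) L = 0 := by
        simp only [lin4]
        rw [← hsh, ← hch, hA, hB, hC]
        field_simp
        ring
      rw [hZfun, deriv_lin4, hZ'L, mul_zero]
  · -- (iv)
    intro x i hxi
    have hsin : Real.sin (c i * x i.castSucc) = 0 := by
      rcases hxi with h | h
      · rw [h, mul_zero, Real.sin_zero]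
      · rw [h, hc]
        show Real.sin ((m i : ℝ) * Real.pi / l i.castSucc * l i.castSucc) = 0
        rw [div_mul_cancel₀ _ (hl i.castSucc).ne']
        exact Real.sin_nat_mul_pi (m i)
    constructor
    · rw [hu2, pd_pi _ hgdZ i.castSucc]
      show (∏ j, Function.update (snocFun F Z) i.castSucc
        (deriv (snocFun F Z i.castSucc)) j (x j)) = 0
      apply Finset.prod_eq_zero (Finset.mem_univ i.castSucc)
      rw [Function.update_self]
      simp only [snocFun_castSucc, hF0]
      rw [deriv_cf]
      simp [hsin]
    · rw [hlapu, pd_pi _ hgdW i.castSucc]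
      show (∏ j, Function.update (snocFun F Wf) i.castSucc
        (deriv (snocFun F Wf i.castSucc)) j (x j)) = 0
      apply Finset.prod_eq_zero (Finset.mem_univ i.castSucc)
      rw [Function.update_self]
      simp only [snocFun_castSucc, hF0]
      rw [deriv_cf]
      simp [hsin]
  · -- (v)
    intro x hx
    have hux : u x = ∏ i, F i (x i.castSucc) := by
      rw [hu2]
      show (∏ j, snocFun F Z j (x j)) = _
      rw [prod_snocFun_eval, hx, hZfun, lin4_zero, mul_one]
    rw [hlapu, pd_pi _ hgdW (Fin.last k)]
    show (∏ i, Function.update (snocFun F Wf) (Fin.last k)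
      (deriv (snocFun F Wf (Fin.last k))) i (x i)) = _
    simp only [snocFun_last]
    rw [update_snocFun_last, prod_snocFun_eval, hx]
    rw [hW, deriv_lin4, lin4_zero, hux]
    rw [hA, hB]
    field_simp
    ring
end

section
/- Let n ≥ 2 and let l₁, …, l_{n−1} > 0. For R > 0 let N₊(R) be the number of (n−1)-tuples (m₁, …, m_{n−1}) of positive integers with Σ_{i=1}^{n−1} (m_i/l_i)² ≤ R², and let N₀(R) be the number of (n−1)-tuples (m₁, …, m_{n−1}) of nonnegative integers with Σ_{i=1}^{n−1} m_i ≥ 1 and Σ_{i=1}^{n−1} (m_i/l_i)² ≤ R². Then N₊(R)/R^{n−1} → ω_{n−1}·2^{−(n−1)}·l₁⋯l_{n−1} and N₀(R)/R^{n−1} → ω_{n−1}·2^{−(n−1)}·l₁⋯l_{n−1} as R → +∞, where ω_{n−1} is the Lebesgue volume of the unit ball in ℝ^{n−1}. -/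
open Filter MeasureTheory Metric Set
open scoped ENNReal

namespace EllipsoidCount
variable {k : ℕ}


/-- Reflection halving: if `s` is invariant under negating coordinate `j`,
then the part with `z j ≥ 0` has half the measure. -/
lemma half_volume (j : Fin k) (s : Set (Fin k → ℝ)) (hs : MeasurableSet s)
    (hsym : (fun z : Fin k → ℝ => fun i => if i = j then -(z i) else z i) ⁻¹' s = s) :
    2 * volume (s ∩ {z | 0 ≤ z j}) = volume s := by
  set σ : (Fin k → ℝ) → (Fin k → ℝ) := fun z => fun i => if i = j then -(z i) else z i with hσ
  have hmp : MeasurePreserving σ :=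
    volume_preserving_pi (f := fun (i : Fin k) (x : ℝ) => if i = j then -x else x)
      (fun i => by
        by_cases h : i = j
        · simpa [h] using Measure.measurePreserving_neg (volume : Measure ℝ)
        · simp only [h, ↓reduceIte]; exact MeasurePreserving.id (volume : Measure ℝ))
  have hm2 : MeasurableSet {z : Fin k → ℝ | 0 ≤ z j} :=
    measurableSet_le measurable_const (measurable_pi_apply j)
  have hpre : σ ⁻¹' (s ∩ {z | 0 ≤ z j}) = s ∩ {z | z j ≤ 0} := by
    rw [Set.preimage_inter, hsym]
    congr 1
    ext z
    simp [σ, neg_nonneg]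
  have hkey : volume (s ∩ {z | z j ≤ 0}) = volume (s ∩ {z | 0 ≤ z j}) := by
    rw [← hpre, hmp.measure_preimage (hs.inter hm2).nullMeasurableSet]
  have hm3 : MeasurableSet {z : Fin k → ℝ | z j ≤ 0} :=
    measurableSet_le (measurable_pi_apply j) measurable_const
  have hcover : s ⊆ (s ∩ {z | 0 ≤ z j}) ∪ (s ∩ {z | z j ≤ 0}) := by
    intro z hz
    rcases le_total 0 (z j) with h | h
    · exact Or.inl ⟨hz, h⟩
    · exact Or.inr ⟨hz, h⟩
  have hzero : volume ((s ∩ {z | 0 ≤ z j}) ∩ (s ∩ {z | z j ≤ 0})) = 0 := by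
    refine measure_mono_null (fun z hz => ?_) (Measure.pi_hyperplane (fun _ => volume) j 0)
    have h1 : z j ≤ 0 := hz.2.2
    have h2 : 0 ≤ z j := hz.1.2
    have := le_antisymm h1 h2
    simpa using this
  have h1 : volume s ≤ 2 * volume (s ∩ {z | 0 ≤ z j}) := by
    calc volume s ≤ volume ((s ∩ {z | 0 ≤ z j}) ∪ (s ∩ {z | z j ≤ 0})) := measure_mono hcover
    _ ≤ volume (s ∩ {z | 0 ≤ z j}) + volume (s ∩ {z | z j ≤ 0}) := measure_union_le _ _
    _ = 2 * volume (s ∩ {z | 0 ≤ z j}) := by rw [hkey, two_mul]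
  have h2 : 2 * volume (s ∩ {z | 0 ≤ z j}) ≤ volume s := by
    have := measure_union_add_inter (μ := (volume : Measure (Fin k → ℝ)))
      (s := s ∩ {z | 0 ≤ z j}) (t := s ∩ {z | z j ≤ 0}) (hs.inter hm3)
    have hle : volume ((s ∩ {z | 0 ≤ z j}) ∪ (s ∩ {z | z j ≤ 0})) ≤ volume s :=
      measure_mono (by intro z hz; rcases hz with h | h <;> exact h.1)
    calc 2 * volume (s ∩ {z | 0 ≤ z j})
        = volume (s ∩ {z | 0 ≤ z j}) + volume (s ∩ {z | z j ≤ 0}) := by rw [hkey, two_mul]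
      _ = volume ((s ∩ {z | 0 ≤ z j}) ∪ (s ∩ {z | z j ≤ 0}))
          + volume ((s ∩ {z | 0 ≤ z j}) ∩ (s ∩ {z | z j ≤ 0})) := this.symm
      _ = volume ((s ∩ {z | 0 ≤ z j}) ∪ (s ∩ {z | z j ≤ 0})) := by rw [hzero, add_zero]
      _ ≤ volume s := hle
  exact le_antisymm h2 h1





/-- Volume of the octant part of the unit ball in `Fin k → ℝ`. -/
lemma octant_volume :
    (2 : ℝ≥0∞) ^ k * volume {z : Fin k → ℝ | (∀ i, 0 ≤ z i) ∧ ∑ i, z i ^ 2 ≤ 1}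
      = volume {z : Fin k → ℝ | ∑ i, z i ^ 2 ≤ 1} := by
  classical
  have hBm : MeasurableSet {z : Fin k → ℝ | ∑ i, z i ^ 2 ≤ 1} := by
    apply measurableSet_le _ measurable_const
    exact Finset.measurable_sum _ fun i _ => (measurable_pi_apply i).pow_const 2
  have key : ∀ t : Finset (Fin k),
      (2 : ℝ≥0∞) ^ t.card *
        volume {z : Fin k → ℝ | (∀ i ∈ t, 0 ≤ z i) ∧ ∑ i, z i ^ 2 ≤ 1}
      = volume {z : Fin k → ℝ | ∑ i, z i ^ 2 ≤ 1} := by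
    intro t
    induction t using Finset.induction_on with
    | empty => simp
    | @insert j t hj ih =>
      rw [← ih]
      have hAm : MeasurableSet {z : Fin k → ℝ | (∀ i ∈ t, 0 ≤ z i) ∧ ∑ i, z i ^ 2 ≤ 1} := by
        have hset2 : {z : Fin k → ℝ | (∀ i ∈ t, 0 ≤ z i) ∧ ∑ i, z i ^ 2 ≤ 1}
            = (⋂ i ∈ t, {z : Fin k → ℝ | 0 ≤ z i}) ∩ {z : Fin k → ℝ | ∑ i, z i ^ 2 ≤ 1} := by
          ext z; simp [forall_and]
        rw [hset2]
        exact (MeasurableSet.biInter t.countable_toSet fun i _ =>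
          measurableSet_le measurable_const (measurable_pi_apply i)).inter hBm
      have hsym : (fun z : Fin k → ℝ => fun i => if i = j then -(z i) else z i) ⁻¹'
          {z : Fin k → ℝ | (∀ i ∈ t, 0 ≤ z i) ∧ ∑ i, z i ^ 2 ≤ 1}
          = {z : Fin k → ℝ | (∀ i ∈ t, 0 ≤ z i) ∧ ∑ i, z i ^ 2 ≤ 1} := by
        ext z
        simp only [Set.mem_preimage, Set.mem_setOf_eq]
        constructor
        · rintro ⟨h1, h2⟩
          refine ⟨fun i hi => ?_, ?_⟩
          · have := h1 i hi
            have hij : i ≠ j := fun h => hj (h ▸ hi)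
            simpa [hij] using this
          · have : ∀ i, (if i = j then -(z i) else z i) ^ 2 = z i ^ 2 := by
              intro i; by_cases h : i = j <;> simp [h]
            simpa [this] using h2
        · rintro ⟨h1, h2⟩
          refine ⟨fun i hi => ?_, ?_⟩
          · have hij : i ≠ j := fun h => hj (h ▸ hi)
            simpa [hij] using h1 i hi
          · have : ∀ i, (if i = j then -(z i) else z i) ^ 2 = z i ^ 2 := by
              intro i; by_cases h : i = j <;> simp [h]
            simpa [this]
      have hhalf := half_volume j _ hAm hsym
      have hset : {z : Fin k → ℝ | (∀ i ∈ insert j t, 0 ≤ z i) ∧ ∑ i, z i ^ 2 ≤ 1}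
          = {z : Fin k → ℝ | (∀ i ∈ t, 0 ≤ z i) ∧ ∑ i, z i ^ 2 ≤ 1} ∩ {z | 0 ≤ z j} := by
        ext z
        simp only [Set.mem_inter_iff, Set.mem_setOf_eq, Finset.mem_insert]
        constructor
        · rintro ⟨h1, h2⟩
          exact ⟨⟨fun i hi => h1 i (Or.inr hi), h2⟩, h1 j (Or.inl rfl)⟩
        · rintro ⟨⟨h1, h2⟩, h3⟩
          exact ⟨fun i hi => hi.elim (fun h => h ▸ h3) (h1 i), h2⟩
      rw [Finset.card_insert_of_notMem hj, hset, pow_succ, mul_assoc, hhalf]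
  have := key Finset.univ
  simpa using this





lemma ball_volume :
    volume {z : Fin k → ℝ | ∑ i, z i ^ 2 ≤ 1}
      = volume (ball (0 : EuclideanSpace ℝ (Fin k)) 1) := by
  have hBm : MeasurableSet {z : Fin k → ℝ | ∑ i, z i ^ 2 ≤ 1} := by
    apply measurableSet_le _ measurable_const
    exact Finset.measurable_sum _ fun i _ => (measurable_pi_apply i).pow_const 2
  have hmp := EuclideanSpace.volume_preserving_symm_measurableEquiv_toLp (Fin k)
  have h1 : volume (closedBall (0 : EuclideanSpace ℝ (Fin k)) 1)
      = volume {z : Fin k → ℝ | ∑ i, z i ^ 2 ≤ 1} := by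
    rw [← hmp.measure_preimage hBm.nullMeasurableSet]
    congr 1
    ext x
    simp only [Set.mem_preimage, Set.mem_setOf_eq, mem_closedBall, dist_zero_right]
    have hx : ∑ i, ((MeasurableEquiv.toLp 2 (Fin k → ℝ)).symm x) i ^ 2 = ‖x‖ ^ 2 := by
      rw [EuclideanSpace.norm_eq, Real.sq_sqrt (by positivity)]
      congr 1
      ext i
      rw [Real.norm_eq_abs, sq_abs]
      rfl
    rw [hx]
    exact (pow_le_one_iff_of_nonneg (norm_nonneg x) two_ne_zero).symm
  have h2 : volume (closedBall (0 : EuclideanSpace ℝ (Fin k)) 1)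
      = volume (ball (0 : EuclideanSpace ℝ (Fin k)) 1) := by
    apply le_antisymm
    · calc volume (closedBall (0 : EuclideanSpace ℝ (Fin k)) 1)
          ≤ volume (ball (0 : EuclideanSpace ℝ (Fin k)) 1 ∪ sphere 0 1) := by
            apply measure_mono
            rw [ball_union_sphere]
        _ ≤ volume (ball (0 : EuclideanSpace ℝ (Fin k)) 1) + volume (sphere (0:EuclideanSpace ℝ (Fin k)) 1) :=
            measure_union_le _ _
        _ = volume (ball (0 : EuclideanSpace ℝ (Fin k)) 1) := by
            rw [Measure.addHaar_sphere_of_ne_zero _ _ one_ne_zero, add_zero]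
    · exact measure_mono ball_subset_closedBall
  rw [← h1, h2]

/-- Volume of the octant ellipsoid. -/
lemma volume_W (l : Fin k → ℝ) (hl : ∀ i, 0 < l i) {r : ℝ} (hr : 0 < r) :
    volume {z : Fin k → ℝ | (∀ i, 0 ≤ z i) ∧ ∑ i, (z i / l i) ^ 2 ≤ r ^ 2}
      = ENNReal.ofReal (r ^ k * ∏ i, l i) *
        ((2 : ℝ≥0∞)⁻¹ ^ k * volume (ball (0 : EuclideanSpace ℝ (Fin k)) 1)) := by
  set D : (Fin k → ℝ) →ₗ[ℝ] (Fin k → ℝ) := Matrix.toLin' (Matrix.diagonal fun i => r * l i)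
  have hD : ∀ z i, D z i = r * l i * z i := by
    intro z i
    rw [Matrix.toLin'_apply, Matrix.mulVec_diagonal]
  have himg : {z : Fin k → ℝ | (∀ i, 0 ≤ z i) ∧ ∑ i, (z i / l i) ^ 2 ≤ r ^ 2}
      = D '' {z : Fin k → ℝ | (∀ i, 0 ≤ z i) ∧ ∑ i, z i ^ 2 ≤ 1} := by
    ext w
    simp only [Set.mem_image, Set.mem_setOf_eq]
    constructor
    · rintro ⟨h1, h2⟩
      refine ⟨fun i => w i / (r * l i), ⟨fun i => ?_, ?_⟩, ?_⟩
      · exact div_nonneg (h1 i) (mul_pos hr (hl i)).le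
      · have : ∀ i, (w i / (r * l i)) ^ 2 = (w i / l i) ^ 2 / r ^ 2 := by
          intro i; rw [div_pow, div_pow, mul_pow, div_div, mul_comm (l i ^ 2) (r ^ 2)]
        rw [Finset.sum_congr rfl fun i _ => this i, ← Finset.sum_div]
        rw [div_le_one (pow_pos hr 2)]
        exact h2
      · ext i
        rw [hD]
        exact mul_div_cancel₀ _ (mul_pos hr (hl i)).ne'
    · rintro ⟨z, ⟨h1, h2⟩, rfl⟩
      constructor
      · intro i
        rw [hD]
        exact mul_nonneg (mul_pos hr (hl i)).le (h1 i)
      · have : ∀ i, (D z i / l i) ^ 2 = r ^ 2 * z i ^ 2 := by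
          intro i
          rw [hD]
          have : r * l i * z i / l i = r * z i := by
            rw [show r * l i * z i = r * z i * l i by ring, mul_div_cancel_right₀ _ (hl i).ne']
          rw [this, mul_pow]
        rw [Finset.sum_congr rfl fun i _ => this i, ← Finset.mul_sum]
        calc r ^ 2 * ∑ i, z i ^ 2 ≤ r ^ 2 * 1 := by
              exact mul_le_mul_of_nonneg_left h2 (by positivity)
          _ = r ^ 2 := mul_one _
  have hdet : LinearMap.det D = r ^ k * ∏ i, l i := by
    rw [LinearMap.det_toLin', Matrix.det_diagonal, Finset.prod_mul_distrib,
      Finset.prod_const, Finset.card_univ, Fintype.card_fin]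
  have hoct : volume {z : Fin k → ℝ | (∀ i, 0 ≤ z i) ∧ ∑ i, z i ^ 2 ≤ 1}
      = (2 : ℝ≥0∞)⁻¹ ^ k * volume (ball (0 : EuclideanSpace ℝ (Fin k)) 1) := by
    rw [← ball_volume, ← octant_volume (k := k), ← mul_assoc, ← mul_pow,
      ENNReal.inv_mul_cancel two_ne_zero ENNReal.ofNat_ne_top, one_pow, one_mul]
  rw [himg, Measure.addHaar_image_linearMap, hdet, hoct,
    abs_of_pos (mul_pos (pow_pos hr k) (Finset.prod_pos fun i _ => hl i))]



/-- The unit cube based at an integer point. -/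
def cube (m : Fin k → ℕ) : Set (Fin k → ℝ) :=
  Set.univ.pi fun i => Set.Ico (m i : ℝ) (m i + 1)

lemma cube_measurable (m : Fin k → ℕ) : MeasurableSet (cube m) :=
  MeasurableSet.univ_pi fun i => measurableSet_Ico

lemma cube_volume (m : Fin k → ℕ) : volume (cube m) = 1 := by
  rw [cube, volume_pi, Measure.pi_pi]
  simp [Real.volume_Ico]

lemma cube_mem_iff {m : Fin k → ℕ} {z : Fin k → ℝ} :
    z ∈ cube m ↔ ∀ i, (m i : ℝ) ≤ z i ∧ z i < m i + 1 := by
  simp [cube, Set.mem_pi]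

lemma cube_disjoint : Pairwise (Function.onFun Disjoint (cube (k := k))) := by
  intro m m' hne
  rw [Function.onFun, Set.disjoint_left]
  intro z hz hz'
  apply hne
  funext i
  have h1 := (cube_mem_iff.mp hz) i
  have h2 := (cube_mem_iff.mp hz') i
  have e1 : ⌊z i⌋₊ = m i := by
    rw [Nat.floor_eq_iff (le_trans (Nat.cast_nonneg _) h1.1)]
    exact ⟨h1.1, h1.2⟩
  have e2 : ⌊z i⌋₊ = m' i := by
    rw [Nat.floor_eq_iff (le_trans (Nat.cast_nonneg _) h2.1)]
    exact ⟨h2.1, h2.2⟩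
  rw [← e1, e2]

lemma mem_cube_floor {z : Fin k → ℝ} (hz : ∀ i, 0 ≤ z i) :
    z ∈ cube (fun i => ⌊z i⌋₊) := by
  rw [cube_mem_iff]
  intro i
  exact ⟨Nat.floor_le (hz i), Nat.lt_floor_add_one (z i)⟩

/-- Counting lemma, upper: disjoint cubes inside `A`. -/
lemma card_le_volume {S : Set (Fin k → ℕ)} (hS : S.Finite) {A : Set (Fin k → ℝ)}
    (h : ∀ m ∈ S, cube m ⊆ A) : (S.ncard : ℝ≥0∞) ≤ volume A := by
  classical
  have h1 : volume (⋃ m ∈ hS.toFinset, cube m) = ∑ m ∈ hS.toFinset, volume (cube m) := by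
    apply measure_biUnion_finset
    · intro x _ y _ hxy
      exact cube_disjoint hxy
    · intro m _
      exact cube_measurable m
  have h2 : ∑ m ∈ hS.toFinset, volume (cube m) = (S.ncard : ℝ≥0∞) := by
    simp [cube_volume, Set.ncard_eq_toFinset_card S hS]
  rw [← h2, ← h1]
  apply measure_mono
  intro z hz
  simp only [Set.mem_iUnion] at hz ⊢
  obtain ⟨m, hm, hzm⟩ := hz
  exact h m (hS.mem_toFinset.mp hm) hzm

/-- Counting lemma, lower: cubes cover `A`. -/
lemma volume_le_card {S : Set (Fin k → ℕ)} (hS : S.Finite) {A : Set (Fin k → ℝ)}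
    (h : A ⊆ ⋃ m ∈ S, cube m) : volume A ≤ (S.ncard : ℝ≥0∞) := by
  classical
  have h1 : volume (⋃ m ∈ hS.toFinset, cube m) = ∑ m ∈ hS.toFinset, volume (cube m) := by
    apply measure_biUnion_finset
    · intro x _ y _ hxy
      exact cube_disjoint hxy
    · intro m _
      exact cube_measurable m
  have h2 : ∑ m ∈ hS.toFinset, volume (cube m) = (S.ncard : ℝ≥0∞) := by
    simp [cube_volume, Set.ncard_eq_toFinset_card S hS]
  rw [← h2, ← h1]
  apply measure_mono
  refine h.trans ?_
  intro z hz
  simp only [Set.mem_iUnion] at hz ⊢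
  obtain ⟨m, hm, hzm⟩ := hz
  exact ⟨m, hS.mem_toFinset.mpr hm, hzm⟩

/-- Finiteness of the lattice point sets. -/
lemma finite_count (l : Fin k → ℝ) (hl : ∀ i, 0 < l i) (R : ℝ) :
    {m : Fin k → ℕ | ∑ i, ((m i : ℝ) / l i) ^ 2 ≤ R ^ 2}.Finite := by
  apply Set.Finite.subset (Set.Finite.pi (fun i : Fin k => Set.finite_Iic ⌈l i * |R|⌉₊))
  intro m hm
  simp only [Set.mem_pi, Set.mem_univ, Set.mem_Iic, forall_true_left]
  intro i
  have hterm : ((m i : ℝ) / l i) ^ 2 ≤ R ^ 2 := by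
    refine le_trans ?_ hm
    exact Finset.single_le_sum (f := fun j => ((m j : ℝ) / l j) ^ 2)
      (fun j _ => sq_nonneg _) (Finset.mem_univ i)
  have h2 : (m i : ℝ) / l i ≤ |R| := by
    have := Real.sqrt_le_sqrt hterm
    rwa [Real.sqrt_sq (div_nonneg (Nat.cast_nonneg _) (hl i).le),
      Real.sqrt_sq_eq_abs] at this
  have h3 : (m i : ℝ) ≤ l i * |R| := by
    rw [div_le_iff₀ (hl i)] at h2
    linarith
  exact_mod_cast h3.trans (Nat.le_ceil _)



/-- Minkowski-type inequality for sums of squares. -/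
lemma sum_sq_add_le (u v : Fin k → ℝ) {r s : ℝ} (hr : 0 ≤ r) (hs : 0 ≤ s)
    (hu : ∑ i, u i ^ 2 ≤ r ^ 2) (hv : ∑ i, v i ^ 2 ≤ s ^ 2) :
    ∑ i, (u i + v i) ^ 2 ≤ (r + s) ^ 2 := by
  set U : EuclideanSpace ℝ (Fin k) := (WithLp.equiv 2 (Fin k → ℝ)).symm u with hU
  set V : EuclideanSpace ℝ (Fin k) := (WithLp.equiv 2 (Fin k → ℝ)).symm v with hV
  have hnorm : ∀ (w : Fin k → ℝ), ‖(WithLp.equiv 2 (Fin k → ℝ)).symm w‖ ^ 2 = ∑ i, w i ^ 2 := by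
    intro w
    rw [EuclideanSpace.norm_eq, Real.sq_sqrt (by positivity)]
    refine Finset.sum_congr rfl fun i _ => ?_
    rw [Real.norm_eq_abs, sq_abs]; rfl
  have hUn : ‖U‖ ≤ r := by
    have h1 : ‖U‖ ^ 2 ≤ r ^ 2 := by rw [hU, hnorm]; exact hu
    have := Real.sqrt_le_sqrt h1
    rwa [Real.sqrt_sq (norm_nonneg U), Real.sqrt_sq hr] at this
  have hVn : ‖V‖ ≤ s := by
    have h1 : ‖V‖ ^ 2 ≤ s ^ 2 := by rw [hV, hnorm]; exact hv
    have := Real.sqrt_le_sqrt h1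
    rwa [Real.sqrt_sq (norm_nonneg V), Real.sqrt_sq hs] at this
  have hsum : U + V = (WithLp.equiv 2 (Fin k → ℝ)).symm (fun i => u i + v i) := by
    ext i
    simp [hU, hV]
  calc ∑ i, (u i + v i) ^ 2 = ‖U + V‖ ^ 2 := by rw [hsum, hnorm]
    _ ≤ (‖U‖ + ‖V‖) ^ 2 := by
        apply pow_le_pow_left₀ (norm_nonneg _) (norm_add_le U V)
    _ ≤ (r + s) ^ 2 := by
        apply pow_le_pow_left₀ (by positivity) (add_le_add hUn hVn)


end EllipsoidCount

open EllipsoidCount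
open Filter


/-- Lattice point counting in ellipsoids: both the number `N₊(R)` of tuples of positive
integers and the number `N₀(R)` of tuples of nonnegative integers (not all zero)
`(m₁, …, m_k)` with `∑ (mᵢ/lᵢ)² ≤ R²` satisfy
`N(R)/R^k → ω_k · 2^{−k} · l₁⋯l_k` as `R → ∞`, where `ω_k` is the volume of the unit
ball of `ℝ^k` (here `k = n − 1 ≥ 1`). -/
theorem ellipsoid_lattice_point_count
    (k : ℕ) (hk : 1 ≤ k) (l : Fin k → ℝ) (hl : ∀ i, 0 < l i) :
    Tendsto (fun R : ℝ =>
        (Set.ncard {m : Fin k → ℕ |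
            (∀ i, 1 ≤ m i) ∧ ∑ i, ((m i : ℝ) / l i) ^ 2 ≤ R ^ 2} : ℝ) / R ^ k)
      atTop
      (nhds ((MeasureTheory.volume
          (Metric.ball (0 : EuclideanSpace ℝ (Fin k)) 1)).toReal *
        (2 : ℝ)⁻¹ ^ k * ∏ i, l i)) ∧
    Tendsto (fun R : ℝ =>
        (Set.ncard {m : Fin k → ℕ |
            1 ≤ ∑ i, m i ∧ ∑ i, ((m i : ℝ) / l i) ^ 2 ≤ R ^ 2} : ℝ) / R ^ k)
      atTop
      (nhds ((MeasureTheory.volume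
          (Metric.ball (0 : EuclideanSpace ℝ (Fin k)) 1)).toReal *
        (2 : ℝ)⁻¹ ^ k * ∏ i, l i)) := by
  have i0 : Fin k := ⟨0, hk⟩
  set V : ℝ := (volume (ball (0 : EuclideanSpace ℝ (Fin k)) 1)).toReal *
      (2 : ℝ)⁻¹ ^ k * ∏ i, l i with hV
  set c : ℝ := Real.sqrt (∑ i, (1 / l i) ^ 2) with hc
  have hc0 : 0 < c := Real.sqrt_pos.mpr
    (Finset.sum_pos (fun i _ => pow_pos (div_pos one_pos (hl i)) 2) ⟨i0, Finset.mem_univ _⟩)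
  have hcsq : ∑ i, (1 / l i) ^ 2 ≤ c ^ 2 :=
    le_of_eq (Real.sq_sqrt (by positivity)).symm
  -- real volume formula
  have hWvol : ∀ r : ℝ, 0 < r →
      (volume {z : Fin k → ℝ | (∀ i, 0 ≤ z i) ∧ ∑ i, (z i / l i) ^ 2 ≤ r ^ 2}).toReal
        = V * r ^ k := by
    intro r hr
    rw [volume_W l hl hr, ENNReal.toReal_mul,
      ENNReal.toReal_ofReal
        (mul_nonneg (pow_nonneg hr.le k) (Finset.prod_nonneg fun i _ => (hl i).le)),
      ENNReal.toReal_mul, ENNReal.toReal_pow, ENNReal.toReal_inv, ENNReal.toReal_ofNat, hV]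
    ring
  have hWfin : ∀ r : ℝ, 0 < r →
      volume {z : Fin k → ℝ | (∀ i, 0 ≤ z i) ∧ ∑ i, (z i / l i) ^ 2 ≤ r ^ 2} ≠ ∞ := by
    intro r hr
    rw [volume_W l hl hr]
    exact ENNReal.mul_ne_top ENNReal.ofReal_ne_top
      (ENNReal.mul_ne_top (ENNReal.pow_ne_top (by simp)) measure_ball_lt_top.ne)
  -- finiteness of the count sets
  have hfinSp : ∀ R : ℝ,
      {m : Fin k → ℕ | (∀ i, 1 ≤ m i) ∧ ∑ i, ((m i : ℝ) / l i) ^ 2 ≤ R ^ 2}.Finite :=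
    fun R => (finite_count l hl R).subset fun m hm => hm.2
  have hfinS0 : ∀ R : ℝ,
      {m : Fin k → ℕ | 1 ≤ ∑ i, m i ∧ ∑ i, ((m i : ℝ) / l i) ^ 2 ≤ R ^ 2}.Finite :=
    fun R => (finite_count l hl R).subset fun m hm => hm.2
  have hfinT : ∀ R : ℝ,
      {m : Fin k → ℕ | ∑ i, (((m i : ℝ) + 1) / l i) ^ 2 ≤ R ^ 2}.Finite := by
    intro R
    apply (finite_count l hl R).subset
    intro m hm
    simp only [Set.mem_setOf_eq] at hm ⊢
    refine le_trans (Finset.sum_le_sum fun i _ => ?_) hm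
    apply pow_le_pow_left₀ (div_nonneg (Nat.cast_nonneg _) (hl i).le)
    exact (div_le_div_iff_of_pos_right (hl i)).mpr (by linarith)
  -- key inequality 1 : lower bound for N₊
  have key1 : ∀ R : ℝ, c < R → V * (R - c) ^ k ≤
      (Set.ncard {m : Fin k → ℕ |
        (∀ i, 1 ≤ m i) ∧ ∑ i, ((m i : ℝ) / l i) ^ 2 ≤ R ^ 2} : ℝ) := by
    intro R hcR
    have hRc : 0 < R - c := by linarith
    -- N₊ = card T
    have hinj : Function.Injective (fun (m : Fin k → ℕ) (i : Fin k) => m i + 1) := by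
      intro a b hab
      funext i
      have := congrFun hab i
      simpa using this
    have himg : {m : Fin k → ℕ | (∀ i, 1 ≤ m i) ∧ ∑ i, ((m i : ℝ) / l i) ^ 2 ≤ R ^ 2}
        = (fun (m : Fin k → ℕ) (i : Fin k) => m i + 1) ''
          {m : Fin k → ℕ | ∑ i, (((m i : ℝ) + 1) / l i) ^ 2 ≤ R ^ 2} := by
      ext m
      simp only [Set.mem_image, Set.mem_setOf_eq]
      constructor
      · rintro ⟨h1, h2⟩
        refine ⟨fun i => m i - 1, ?_, ?_⟩
        · refine le_trans (le_of_eq ?_) h2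
          refine Finset.sum_congr rfl fun i _ => ?_
          congr 2
          have : m i - 1 + 1 = m i := Nat.sub_add_cancel (h1 i)
          exact_mod_cast congrArg (Nat.cast (R := ℝ)) this
        · funext i
          exact Nat.sub_add_cancel (h1 i)
      · rintro ⟨m', hm', rfl⟩
        refine ⟨fun i => Nat.le_add_left 1 (m' i), ?_⟩
        refine le_trans (le_of_eq ?_) hm'
        refine Finset.sum_congr rfl fun i _ => ?_
        congr 2
        push_cast
        ring
    have hcardeq : Set.ncard {m : Fin k → ℕ |
          (∀ i, 1 ≤ m i) ∧ ∑ i, ((m i : ℝ) / l i) ^ 2 ≤ R ^ 2}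
        = Set.ncard {m : Fin k → ℕ | ∑ i, (((m i : ℝ) + 1) / l i) ^ 2 ≤ R ^ 2} := by
      rw [himg, Set.ncard_image_of_injective _ hinj]
    -- cover W(R - c) by cubes from T
    have hcover : {z : Fin k → ℝ | (∀ i, 0 ≤ z i) ∧ ∑ i, (z i / l i) ^ 2 ≤ (R - c) ^ 2}
        ⊆ ⋃ m ∈ {m : Fin k → ℕ | ∑ i, (((m i : ℝ) + 1) / l i) ^ 2 ≤ R ^ 2}, cube m := by
      rintro z ⟨hz1, hz2⟩
      refine Set.mem_biUnion (s := {m : Fin k → ℕ | ∑ i, (((m i : ℝ) + 1) / l i) ^ 2 ≤ R ^ 2})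
        ?_ (mem_cube_floor hz1)
      show ∑ i, (((⌊z i⌋₊ : ℝ) + 1) / l i) ^ 2 ≤ R ^ 2
      have step1 : ∑ i, (((⌊z i⌋₊ : ℝ) + 1) / l i) ^ 2 ≤ ∑ i, ((z i + 1) / l i) ^ 2 := by
        refine Finset.sum_le_sum fun i _ => ?_
        apply pow_le_pow_left₀ (div_nonneg (by positivity) (hl i).le)
        exact (div_le_div_iff_of_pos_right (hl i)).mpr (by linarith [Nat.floor_le (hz1 i)])
      have step2 : ∑ i, ((z i + 1) / l i) ^ 2 ≤ ((R - c) + c) ^ 2 := by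
        have := sum_sq_add_le (fun i => z i / l i) (fun i => 1 / l i) hRc.le hc0.le hz2 hcsq
        refine le_trans (le_of_eq ?_) this
        refine Finset.sum_congr rfl fun i _ => ?_
        rw [add_div]
      calc ∑ i, (((⌊z i⌋₊ : ℝ) + 1) / l i) ^ 2 ≤ ((R - c) + c) ^ 2 := step1.trans step2
        _ = R ^ 2 := by ring
    have hvc := volume_le_card (hfinT R) hcover
    have h' := ENNReal.toReal_mono (ENNReal.natCast_ne_top _) hvc
    rw [hWvol (R - c) hRc, ENNReal.toReal_natCast _] at h'
    rw [hcardeq]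
    exact h'
  -- key inequality 2 : N₊ ≤ N₀
  have key2 : ∀ R : ℝ,
      (Set.ncard {m : Fin k → ℕ |
        (∀ i, 1 ≤ m i) ∧ ∑ i, ((m i : ℝ) / l i) ^ 2 ≤ R ^ 2} : ℝ) ≤
      (Set.ncard {m : Fin k → ℕ |
        1 ≤ ∑ i, m i ∧ ∑ i, ((m i : ℝ) / l i) ^ 2 ≤ R ^ 2} : ℝ) := by
    intro R
    have hsub : {m : Fin k → ℕ | (∀ i, 1 ≤ m i) ∧ ∑ i, ((m i : ℝ) / l i) ^ 2 ≤ R ^ 2}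
        ⊆ {m : Fin k → ℕ | 1 ≤ ∑ i, m i ∧ ∑ i, ((m i : ℝ) / l i) ^ 2 ≤ R ^ 2} := by
      rintro m ⟨h1, h2⟩
      refine ⟨le_trans (h1 i0) (Finset.single_le_sum (fun j _ => Nat.zero_le _)
        (Finset.mem_univ i0)), h2⟩
    exact_mod_cast Set.ncard_le_ncard hsub (hfinS0 R)
  -- key inequality 3 : upper bound for N₀
  have key3 : ∀ R : ℝ, c < R →
      (Set.ncard {m : Fin k → ℕ |
        1 ≤ ∑ i, m i ∧ ∑ i, ((m i : ℝ) / l i) ^ 2 ≤ R ^ 2} : ℝ) ≤ V * (R + c) ^ k := by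
    intro R hcR
    have hR0 : 0 < R := hc0.trans hcR
    have hRC : 0 < R + c := by linarith
    have hcub : ∀ m ∈ {m : Fin k → ℕ | 1 ≤ ∑ i, m i ∧ ∑ i, ((m i : ℝ) / l i) ^ 2 ≤ R ^ 2},
        cube m ⊆ {z : Fin k → ℝ | (∀ i, 0 ≤ z i) ∧ ∑ i, (z i / l i) ^ 2 ≤ (R + c) ^ 2} := by
      rintro m hm z hz
      have hzc := cube_mem_iff.mp hz
      have hz0 : ∀ i, 0 ≤ z i := fun i => le_trans (Nat.cast_nonneg _) (hzc i).1
      refine ⟨hz0, ?_⟩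
      have step1 : ∑ i, (z i / l i) ^ 2 ≤ ∑ i, (((m i : ℝ) + 1) / l i) ^ 2 := by
        refine Finset.sum_le_sum fun i _ => ?_
        apply pow_le_pow_left₀ (div_nonneg (hz0 i) (hl i).le)
        exact (div_le_div_iff_of_pos_right (hl i)).mpr (hzc i).2.le
      have step2 : ∑ i, (((m i : ℝ) + 1) / l i) ^ 2 ≤ (R + c) ^ 2 := by
        have := sum_sq_add_le (fun i => (m i : ℝ) / l i) (fun i => 1 / l i)
          hR0.le hc0.le hm.2 hcsq
        refine le_trans (le_of_eq ?_) this
        refine Finset.sum_congr rfl fun i _ => ?_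
        rw [add_div]
      exact step1.trans step2
    have hvc := card_le_volume (hfinS0 R) hcub
    have h' := ENNReal.toReal_mono (hWfin (R + c) hRC) hvc
    rw [hWvol (R + c) hRC, ENNReal.toReal_natCast _] at h'
    exact h'
  -- limit of the bounding functions
  have hquot : ∀ a : ℝ, Tendsto (fun R : ℝ => (R + a) / R) atTop (nhds 1) := by
    intro a
    have h0 : Tendsto (fun R : ℝ => 1 + a / R) atTop (nhds 1) := by
      have := (tendsto_const_nhds (x := a) (f := atTop)).div_atTop (tendsto_id (α := ℝ))
      simpa using (tendsto_const_nhds (x := (1:ℝ)) (f := atTop)).add this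
    apply h0.congr'
    filter_upwards [Ioi_mem_atTop (0:ℝ)] with R hR
    have : R ≠ 0 := ne_of_gt hR
    field_simp
  have hbound : ∀ a : ℝ, Tendsto (fun R : ℝ => V * ((R + a) / R) ^ k) atTop (nhds V) := by
    intro a
    have := ((hquot a).pow k).const_mul V
    simpa using this
  have hL := hbound (-c)
  have hU := hbound c
  -- assemble : squeeze both
  have main : ∀ f : ℝ → ℝ,
      (∀ R : ℝ, c < R → V * (R - c) ^ k ≤ f R ∧ f R ≤ V * (R + c) ^ k) →
      Tendsto (fun R => f R / R ^ k) atTop (nhds V) := by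
    intro f hf
    refine tendsto_of_tendsto_of_tendsto_of_le_of_le' hL hU ?_ ?_
    · filter_upwards [Ioi_mem_atTop c] with R hR
      have hR0 : 0 < R := hc0.trans hR
      have hRk : (0:ℝ) < R ^ k := pow_pos hR0 k
      rw [show R + -c = R - c by ring, div_pow, ← mul_div_assoc]
      exact (div_le_div_iff_of_pos_right hRk).mpr ((hf R hR).1)
    · filter_upwards [Ioi_mem_atTop c] with R hR
      have hR0 : 0 < R := hc0.trans hR
      have hRk : (0:ℝ) < R ^ k := pow_pos hR0 k
      rw [div_pow, ← mul_div_assoc]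
      exact (div_le_div_iff_of_pos_right hRk).mpr ((hf R hR).2)
  constructor
  · apply main
    intro R hR
    exact ⟨key1 R hR, le_trans (key2 R) (key3 R hR)⟩
  · apply main
    intro R hR
    exact ⟨le_trans (key1 R hR) (key2 R), key3 R hR⟩
end

section
/- Let n ≥ 2, let l₁, …, lₙ > 0 with lₙ > max_{1≤i≤n−1} l_i, and let ϱ > 0. For a tuple m = (m₁, …, m_{n−1}) of positive integers, set η(m) = (Σ_{i=1}^{n−1} (m_iπ/l_i)²)^{1/2}. For τ > 0 let A⁰(τ) be the number of such tuples m satisfying (2η(m)³/ϱ³)·[((sinh(η(m)lₙ))(cosh(η(m)lₙ)) + η(m)lₙ)/(sinh²(η(m)lₙ) − η(m)²lₙ²)] ≤ τ³. Then A⁰(τ)/τ^{n−1} → ω_{n−1}·(16^{1/3}·π)^{−(n−1)}·l₁⋯l_{n−1}·ϱ^{n−1} as τ → +∞. -/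
open Filter

/-- `eta l m = (∑ᵢ (mᵢ π / lᵢ)²)^{1/2}` for a tuple `m` of integers. -/
noncomputable def eta {k : ℕ} (l : Fin (k + 1) → ℝ) (m : Fin k → ℕ) : ℝ :=
  Real.sqrt (∑ i : Fin k, ((m i : ℝ) * Real.pi / l i.castSucc) ^ 2)

/-- The cube of the biharmonic Steklov eigenvalue of the box associated with the
frequency `b`, height `L` and density `ϱ`:
`(2b³/ϱ³)·(sinh(bL)cosh(bL) + bL)/(sinh²(bL) − b²L²)`. -/
noncomputable def steklovCubed (b L ϱ : ℝ) : ℝ :=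
  (2 * b ^ 3 / ϱ ^ 3) *
    ((Real.sinh (b * L) * Real.cosh (b * L) + b * L) /
      (Real.sinh (b * L) ^ 2 - b ^ 2 * L ^ 2))

namespace SteklovAux

open MeasureTheory Set ENNReal

variable {k : ℕ}

/-- The Euclidean norm of a tuple, as a `sqrt` of a sum of squares. -/
noncomputable def sq2 (x : Fin k → ℝ) : ℝ := Real.sqrt (∑ i, x i ^ 2)

lemma sq2_nonneg (x : Fin k → ℝ) : 0 ≤ sq2 x := Real.sqrt_nonneg _

lemma continuous_sq2 : Continuous (sq2 (k := k)) :=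
  Real.continuous_sqrt.comp (continuous_finset_sum _ fun i _ => (continuous_apply i).pow 2)

lemma sq2_eq_norm (x : Fin k → ℝ) :
    sq2 x = ‖(WithLp.equiv 2 (Fin k → ℝ)).symm x‖ := by
  rw [EuclideanSpace.norm_eq]
  unfold sq2
  congr 1
  refine Finset.sum_congr rfl fun i _ => ?_
  rw [WithLp.equiv_symm_apply, WithLp.ofLp_toLp, Real.norm_eq_abs, sq_abs]

lemma sq2_triangle (x y : Fin k → ℝ) : sq2 (fun i => x i + y i) ≤ sq2 x + sq2 y := by
  simp only [sq2_eq_norm]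
  have h : (WithLp.equiv 2 (Fin k → ℝ)).symm (fun i => x i + y i)
      = (WithLp.equiv 2 (Fin k → ℝ)).symm x + (WithLp.equiv 2 (Fin k → ℝ)).symm y := rfl
  rw [h]
  exact norm_add_le _ _

lemma sq2_mono {x y : Fin k → ℝ} (hx : ∀ i, 0 ≤ x i) (hxy : ∀ i, x i ≤ y i) :
    sq2 x ≤ sq2 y := by
  apply Real.sqrt_le_sqrt
  exact Finset.sum_le_sum fun i _ => pow_le_pow_left₀ (hx i) (hxy i) 2

lemma sq2_single_le {x : Fin k → ℝ} (hx : ∀ i, 0 ≤ x i) (i : Fin k) : x i ≤ sq2 x := by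
  have h1 : x i = Real.sqrt (x i ^ 2) := (Real.sqrt_sq (hx i)).symm
  rw [h1]
  apply Real.sqrt_le_sqrt
  exact Finset.single_le_sum (fun j _ => sq_nonneg (x j)) (Finset.mem_univ i)

lemma sq2_div (x : Fin k → ℝ) {R : ℝ} (hR : 0 < R) :
    sq2 (fun i => x i / R) = sq2 x / R := by
  unfold sq2
  have h : ∑ i, (x i / R) ^ 2 = (∑ i, x i ^ 2) / R ^ 2 := by
    rw [Finset.sum_div]
    exact Finset.sum_congr rfl fun i _ => div_pow _ _ _
  rw [h, Real.sqrt_div' _ (sq_nonneg R), Real.sqrt_sq hR.le]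

/-- The counting set. -/
def cntSet (a : Fin k → ℝ) (R : ℝ) : Set (Fin k → ℕ) :=
  {m | (∀ i, 1 ≤ m i) ∧ sq2 (fun i => (m i : ℝ) / a i) ≤ R}

/-- The (quarter-ellipsoid) comparison region. -/
def ellQ (a : Fin k → ℝ) (R : ℝ) : Set (Fin k → ℝ) :=
  {x | (∀ i, 0 ≤ x i) ∧ sq2 (fun i => x i / a i) ≤ R}

lemma cntSet_finite (a : Fin k → ℝ) (ha : ∀ i, 0 < a i) (R : ℝ) :
    (cntSet a R).Finite := by
  have hsub : cntSet a R ⊆ Set.univ.pi fun i => Set.Iic ⌈a i * max R 0⌉₊ := by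
    intro m hm i _
    have hnn : ∀ j, 0 ≤ (m j : ℝ) / a j := fun j =>
      div_nonneg (Nat.cast_nonneg _) (ha j).le
    have h1 : (m i : ℝ) / a i ≤ max R 0 :=
      le_trans (le_trans (sq2_single_le hnn i) hm.2) (le_max_left _ _)
    have h2 : (m i : ℝ) ≤ a i * max R 0 := by
      rw [div_le_iff₀ (ha i)] at h1; linarith [h1]
    have h3 : (m i : ℝ) ≤ (⌈a i * max R 0⌉₊ : ℝ) := h2.trans (Nat.le_ceil _)
    exact_mod_cast h3
  exact Set.Finite.subset (Set.Finite.pi fun i => Set.finite_Iic _) hsub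

/-! ### Volume computations -/

lemma measurableSet_ellQ (a : Fin k → ℝ) (R : ℝ) : MeasurableSet (ellQ a R) := by
  have h : ellQ a R = (⋂ i, {x : Fin k → ℝ | 0 ≤ x i}) ∩
      {x : Fin k → ℝ | sq2 (fun i => x i / a i) ≤ R} := by
    ext x; simp [ellQ, Set.mem_iInter]
  rw [h]
  refine MeasurableSet.inter (MeasurableSet.iInter fun i => ?_) ?_
  · exact measurableSet_le measurable_const (measurable_pi_apply i)
  · exact (isClosed_le (continuous_sq2.comp
      (continuous_pi fun i => (continuous_apply i).div_const _)) continuous_const).measurableSet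

lemma volume_hyperplane (j : Fin k) : volume {x : Fin k → ℝ | x j = 0} = 0 := by
  have h : {x : Fin k → ℝ | x j = 0}
      = (LinearMap.ker (LinearMap.proj j : (Fin k → ℝ) →ₗ[ℝ] ℝ) : Set (Fin k → ℝ)) := by
    ext x
    simp [LinearMap.mem_ker]
  rw [h]
  apply Measure.addHaar_submodule
  intro htop
  rw [LinearMap.ker_eq_top] at htop
  have := LinearMap.congr_fun htop (Pi.single j 1)
  simp [LinearMap.proj_apply] at this

/-- Reflection in coordinate `j` preserves Lebesgue measure. -/
lemma volume_reflect (j : Fin k) (S : Set (Fin k → ℝ)) :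
    volume ((fun (x : Fin k → ℝ) i => (if i = j then (-1 : ℝ) else 1) * x i) ⁻¹' S) = volume S := by
  classical
  set d : Fin k → ℝ := fun i => if i = j then (-1 : ℝ) else 1 with hd
  set f : (Fin k → ℝ) →ₗ[ℝ] (Fin k → ℝ) := Matrix.toLin' (Matrix.diagonal d) with hf
  have habs : |∏ i, d i| = 1 := by
    rw [Finset.abs_prod]
    apply Finset.prod_eq_one
    intro i _
    simp only [hd]
    split <;> norm_num
  have hdet : LinearMap.det f = ∏ i, d i := by
    rw [hf, LinearMap.det_toLin', Matrix.det_diagonal]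
  have hdetne : LinearMap.det f ≠ 0 := by
    intro h0
    rw [h0] at hdet
    rw [← hdet] at habs
    norm_num at habs
  have happ : (fun (x : Fin k → ℝ) i => (if i = j then (-1 : ℝ) else 1) * x i) = ⇑f := by
    funext x i
    rw [hf]
    simp [Matrix.toLin'_apply, Matrix.mulVec_diagonal, hd]
  rw [happ, Measure.addHaar_preimage_linearMap volume hdetne, hdet, abs_inv, habs]
  norm_num

lemma measurableSet_QF (F : Finset (Fin k)) :
    MeasurableSet {x : Fin k → ℝ | (∀ i ∈ F, 0 ≤ x i) ∧ sq2 x ≤ 1} := by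
  have h : {x : Fin k → ℝ | (∀ i ∈ F, 0 ≤ x i) ∧ sq2 x ≤ 1}
      = (⋂ i ∈ F, {x : Fin k → ℝ | 0 ≤ x i}) ∩ {x : Fin k → ℝ | sq2 x ≤ 1} := by
    ext x; simp [Set.mem_iInter]
  rw [h]
  refine MeasurableSet.inter (MeasurableSet.biInter (Set.to_countable _) fun i _ => ?_) ?_
  · exact measurableSet_le measurable_const (measurable_pi_apply i)
  · exact (isClosed_le continuous_sq2 continuous_const).measurableSet

/-- By reflection symmetry, the orthant part of the unit ball has volume
`2^|F|` times smaller. -/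
lemma volume_orthant (F : Finset (Fin k)) :
    volume {x : Fin k → ℝ | (∀ i ∈ F, 0 ≤ x i) ∧ sq2 x ≤ 1} * 2 ^ F.card
      = volume {x : Fin k → ℝ | sq2 x ≤ 1} := by
  classical
  induction F using Finset.induction_on with
  | empty => simp
  | @insert j F hjF ih =>
    set S := {x : Fin k → ℝ | (∀ i ∈ insert j F, 0 ≤ x i) ∧ sq2 x ≤ 1} with hS
    set σ : (Fin k → ℝ) → (Fin k → ℝ) := fun x i => (if i = j then (-1 : ℝ) else 1) * x i
      with hσ
    have hσsq2 : ∀ x, sq2 (σ x) = sq2 x := by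
      intro x
      unfold sq2
      congr 1
      apply Finset.sum_congr rfl
      intro i _
      simp only [hσ]
      split <;> ring
    have hunion : S ∪ σ ⁻¹' S = {x : Fin k → ℝ | (∀ i ∈ F, 0 ≤ x i) ∧ sq2 x ≤ 1} := by
      ext x
      simp only [Set.mem_union, Set.mem_preimage, hS, Set.mem_setOf_eq, hσsq2,
        Finset.mem_insert]
      constructor
      · rintro (⟨h1, h2⟩ | ⟨h1, h2⟩)
        · exact ⟨fun i hi => h1 i (Or.inr hi), h2⟩
        · refine ⟨fun i hi => ?_, h2⟩
          have hij : i ≠ j := fun h => hjF (h ▸ hi)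
          have := h1 i (Or.inr hi)
          simp only [hσ, if_neg hij, one_mul] at this
          exact this
      · rintro ⟨h1, h2⟩
        rcases le_total 0 (x j) with hxj | hxj
        · left
          refine ⟨fun i hi => ?_, h2⟩
          rcases hi with rfl | hi
          · exact hxj
          · exact h1 i hi
        · right
          refine ⟨fun i hi => ?_, h2⟩
          rcases hi with rfl | hi
          · show (0 : ℝ) ≤ (if i = i then (-1 : ℝ) else 1) * x i
            rw [if_pos rfl]
            linarith
          · have hij : i ≠ j := fun h => hjF (h ▸ hi)
            show (0 : ℝ) ≤ (if i = j then (-1 : ℝ) else 1) * x i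
            rw [if_neg hij, one_mul]
            exact h1 i hi
    have hinter : S ∩ σ ⁻¹' S ⊆ {x : Fin k → ℝ | x j = 0} := by
      rintro x ⟨hx1, hx2⟩
      have h1 : 0 ≤ x j := hx1.1 j (Finset.mem_insert_self _ _)
      have h2 : (0 : ℝ) ≤ (if j = j then (-1 : ℝ) else 1) * x j :=
        hx2.1 j (Finset.mem_insert_self _ _)
      rw [if_pos rfl] at h2
      have : x j = 0 := by linarith
      exact this
    have hmeasS : MeasurableSet S := measurableSet_QF _
    have hσmeas : Measurable σ :=
      measurable_pi_lambda _ fun i => (measurable_pi_apply i).const_mul _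
    have hkey : volume {x : Fin k → ℝ | (∀ i ∈ F, 0 ≤ x i) ∧ sq2 x ≤ 1}
        = 2 * volume S := by
      rw [← hunion]
      have h1 : volume (S ∪ σ ⁻¹' S) + volume (S ∩ σ ⁻¹' S)
          = volume S + volume (σ ⁻¹' S) :=
        measure_union_add_inter S (hmeasS.preimage hσmeas)
      have h2 : volume (S ∩ σ ⁻¹' S) = 0 :=
        measure_mono_null hinter (volume_hyperplane j)
      have h3 : volume (σ ⁻¹' S) = volume S := volume_reflect j S
      rw [h2, add_zero, h3] at h1
      rw [h1]
      ring
    rw [Finset.card_insert_of_notMem hjF, pow_succ]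
    calc volume S * (2 ^ F.card * 2) = (2 * volume S) * 2 ^ F.card := by ring
    _ = volume {x : Fin k → ℝ | (∀ i ∈ F, 0 ≤ x i) ∧ sq2 x ≤ 1} * 2 ^ F.card := by
        rw [hkey]
    _ = volume {x : Fin k → ℝ | sq2 x ≤ 1} := ih

/-- The full `sq2`-unit-ball in the pi space has the volume of the Euclidean unit ball. -/
lemma volume_B (hk : 1 ≤ k) :
    volume {x : Fin k → ℝ | sq2 x ≤ 1}
      = volume (Metric.ball (0 : EuclideanSpace ℝ (Fin k)) 1) := by
  have hmp := EuclideanSpace.volume_preserving_symm_measurableEquiv_toLp (Fin k)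
  have hpre : (MeasurableEquiv.toLp 2 (Fin k → ℝ)).symm ⁻¹' {x : Fin k → ℝ | sq2 x ≤ 1}
      = Metric.closedBall (0 : EuclideanSpace ℝ (Fin k)) 1 := by
    ext x
    have hnorm : sq2 ((MeasurableEquiv.toLp 2 (Fin k → ℝ)).symm x) = ‖x‖ := by
      rw [EuclideanSpace.norm_eq]
      unfold sq2
      congr 1
      refine Finset.sum_congr rfl fun i _ => ?_
      rw [Real.norm_eq_abs, sq_abs]
      rfl
    simp only [Set.mem_preimage, Set.mem_setOf_eq, Metric.mem_closedBall, dist_zero_right,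
      hnorm]
  have hmeas : MeasurableSet {x : Fin k → ℝ | sq2 x ≤ 1} :=
    (isClosed_le continuous_sq2 continuous_const).measurableSet
  have h1 : volume (Metric.closedBall (0 : EuclideanSpace ℝ (Fin k)) 1)
      = volume {x : Fin k → ℝ | sq2 x ≤ 1} := by
    rw [← hpre]
    exact hmp.measure_preimage hmeas.nullMeasurableSet
  haveI : Nonempty (Fin k) := ⟨⟨0, hk⟩⟩
  have h2 : volume (Metric.closedBall (0 : EuclideanSpace ℝ (Fin k)) 1)
      = volume (Metric.ball (0 : EuclideanSpace ℝ (Fin k)) 1) := by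
    rw [← Metric.ball_union_sphere]
    refine le_antisymm ?_ (measure_mono Set.subset_union_left)
    refine le_trans (measure_union_le _ _) ?_
    rw [Measure.addHaar_sphere volume 0 1, add_zero]
  rw [← h1, h2]

/-- Scaling: the volume of the quarter ellipsoid. -/
lemma volume_ellQ (a : Fin k → ℝ) (ha : ∀ i, 0 < a i) {R : ℝ} (hR : 0 < R) :
    volume (ellQ a R)
      = ENNReal.ofReal ((∏ i, a i) * R ^ k)
          * volume {x : Fin k → ℝ | (∀ i, 0 ≤ x i) ∧ sq2 x ≤ 1} := by
  classical
  set d : Fin k → ℝ := fun i => (a i * R)⁻¹ with hd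
  set f : (Fin k → ℝ) →ₗ[ℝ] (Fin k → ℝ) := Matrix.toLin' (Matrix.diagonal d) with hf
  have hdpos : ∀ i, 0 < d i := fun i => inv_pos.mpr (mul_pos (ha i) hR)
  have hdet : LinearMap.det f = ∏ i, d i := by
    rw [hf, LinearMap.det_toLin', Matrix.det_diagonal]
  have hprodpos : 0 < ∏ i, d i := Finset.prod_pos fun i _ => hdpos i
  have hdetne : LinearMap.det f ≠ 0 := by rw [hdet]; exact hprodpos.ne'
  have happ : ∀ x i, f x i = (a i * R)⁻¹ * x i := by
    intro x i
    rw [hf]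
    simp [Matrix.toLin'_apply, Matrix.mulVec_diagonal, hd]
  have hpre : ellQ a R = f ⁻¹' {x : Fin k → ℝ | (∀ i, 0 ≤ x i) ∧ sq2 x ≤ 1} := by
    ext x
    simp only [ellQ, Set.mem_setOf_eq, Set.mem_preimage]
    have hfx : (fun i => f x i) = fun i => x i / a i / R := by
      funext i
      rw [happ]
      field_simp
    constructor
    · rintro ⟨h1, h2⟩
      constructor
      · intro i
        rw [happ]
        exact mul_nonneg (inv_pos.mpr (mul_pos (ha i) hR)).le (h1 i)
      · show sq2 (fun i => f x i) ≤ 1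
        rw [hfx, sq2_div _ hR, div_le_one hR]
        exact h2
    · rintro ⟨h1, h2⟩
      constructor
      · intro i
        have hthis := h1 i
        rw [happ] at hthis
        have hc := inv_pos.mpr (mul_pos (ha i) hR)
        nlinarith [hthis, hc]
      · have h2' : sq2 (fun i => f x i) ≤ 1 := h2
        rw [hfx, sq2_div _ hR, div_le_one hR] at h2'
        exact h2'
  rw [hpre, Measure.addHaar_preimage_linearMap volume hdetne, hdet]
  congr 1
  rw [abs_inv, abs_of_pos hprodpos]
  congr 1
  rw [← Finset.prod_inv_distrib]
  simp only [hd, inv_inv]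
  rw [Finset.prod_mul_distrib, Finset.prod_const, Finset.card_univ, Fintype.card_fin]

/-! ### Lattice point counting via unit cubes -/

/-- The half-open unit cube attached to a positive integer point. -/
def cube (m : Fin k → ℕ) : Set (Fin k → ℝ) :=
  Set.univ.pi fun i => Set.Ioc ((m i : ℝ) - 1) (m i)

lemma volume_cube (m : Fin k → ℕ) : volume (cube m) = 1 := by
  rw [cube, volume_pi_pi]
  have h : ∀ i : Fin k, volume (Set.Ioc ((m i : ℝ) - 1) (m i)) = 1 := by
    intro i
    rw [Real.volume_Ioc]
    norm_num
  simp [h]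

lemma measurableSet_cube (m : Fin k → ℕ) : MeasurableSet (cube m) :=
  MeasurableSet.univ_pi fun i => measurableSet_Ioc

lemma cube_mem_unique {p q : ℕ} {x : ℝ} (hp1 : (p : ℝ) - 1 < x) (hp2 : x ≤ p)
    (hq1 : (q : ℝ) - 1 < x) (hq2 : x ≤ q) : p = q := by
  have h1 : (p : ℝ) < (q : ℝ) + 1 := by linarith
  have h2 : (q : ℝ) < (p : ℝ) + 1 := by linarith
  have h1' : p < q + 1 := by exact_mod_cast h1
  have h2' : q < p + 1 := by exact_mod_cast h2
  omega

lemma cube_disjoint {m m' : Fin k → ℕ} (h : m ≠ m') : Disjoint (cube m) (cube m') := by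
  rw [Set.disjoint_left]
  intro x hx hx'
  apply h
  funext i
  have h1 := hx i (Set.mem_univ i)
  have h2 := hx' i (Set.mem_univ i)
  exact cube_mem_unique h1.1 h1.2 h2.1 h2.2

lemma cube_subset_ellQ (a : Fin k → ℝ) (ha : ∀ i, 0 < a i) {R : ℝ} {m : Fin k → ℕ}
    (hm : m ∈ cntSet a R) : cube m ⊆ ellQ a R := by
  intro x hx
  have hx' : ∀ i, (m i : ℝ) - 1 < x i ∧ x i ≤ m i := fun i => hx i (Set.mem_univ i)
  constructor
  · intro i
    have h1 : (1 : ℝ) ≤ (m i : ℝ) := by exact_mod_cast hm.1 i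
    linarith [(hx' i).1]
  · refine le_trans (sq2_mono ?_ ?_) hm.2
    · intro i
      have h1 : (1 : ℝ) ≤ (m i : ℝ) := by exact_mod_cast hm.1 i
      have := (hx' i).1
      exact div_nonneg (by linarith) (ha i).le
    · intro i
      exact (div_le_div_iff_of_pos_right (ha i)).mpr (hx' i).2

/-- Upper bound: the number of counted lattice points is at most the volume of the
quarter ellipsoid. -/
lemma ncard_le_volume (a : Fin k → ℝ) (ha : ∀ i, 0 < a i) (R : ℝ) :
    ((cntSet a R).ncard : ℝ≥0∞) ≤ volume (ellQ a R) := by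
  classical
  have hfin := cntSet_finite a ha R
  rw [Set.ncard_eq_toFinset_card _ hfin]
  calc ((hfin.toFinset.card : ℝ≥0∞))
      = ∑ m ∈ hfin.toFinset, volume (cube m) := by
        simp [volume_cube]
    _ = volume (⋃ m ∈ hfin.toFinset, cube m) := by
        have hdisj : (hfin.toFinset : Set (Fin k → ℕ)).PairwiseDisjoint cube :=
          fun m _ m' _ hne => cube_disjoint hne
        rw [measure_biUnion_finset hdisj fun m _ => measurableSet_cube m]
    _ ≤ volume (ellQ a R) := by
        apply measure_mono
        apply Set.iUnion₂_subset
        intro m hm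
        exact cube_subset_ellQ a ha (hfin.mem_toFinset.mp hm)

/-- Lower bound: the volume of the shrunk quarter ellipsoid is at most the number of
counted lattice points. -/
lemma volume_le_ncard (a : Fin k → ℝ) (ha : ∀ i, 0 < a i) (R : ℝ) :
    volume (ellQ a (R - sq2 (fun i => (a i)⁻¹))) ≤ ((cntSet a R).ncard : ℝ≥0∞) := by
  classical
  have hfin := cntSet_finite a ha R
  set c0 := sq2 (fun i => (a i)⁻¹) with hc0
  have hsub : ellQ a (R - c0) ⊆
      (⋃ m ∈ hfin.toFinset, cube m) ∪ (⋃ j, {x : Fin k → ℝ | x j = 0}) := by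
    intro x hx
    by_cases hzero : ∃ j, x j = 0
    · right
      obtain ⟨j, hj⟩ := hzero
      exact Set.mem_iUnion.mpr ⟨j, hj⟩
    · left
      push_neg at hzero
      have hxpos : ∀ i, 0 < x i := fun i => lt_of_le_of_ne (hx.1 i) (Ne.symm (hzero i))
      set m : Fin k → ℕ := fun i => ⌈x i⌉₊ with hm
      have hm1 : ∀ i, 1 ≤ m i := fun i => Nat.ceil_pos.mpr (hxpos i)
      have hmem : x ∈ cube m := by
        intro i _
        constructor
        · have : (⌈x i⌉₊ : ℝ) < x i + 1 := Nat.ceil_lt_add_one (hxpos i).le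
          simp only [hm]
          linarith
        · exact Nat.le_ceil (x i)
      have hmcnt : m ∈ cntSet a R := by
        refine ⟨hm1, ?_⟩
        have hstep : ∀ i, (m i : ℝ) / a i ≤ x i / a i + (a i)⁻¹ := by
          intro i
          have h1 : (m i : ℝ) ≤ x i + 1 := (Nat.ceil_lt_add_one (hxpos i).le).le
          have h2 : (x i + 1) / a i = x i / a i + (a i)⁻¹ := by field_simp
          calc (m i : ℝ) / a i ≤ (x i + 1) / a i := (div_le_div_iff_of_pos_right (ha i)).mpr h1
            _ = x i / a i + (a i)⁻¹ := h2
        calc sq2 (fun i => (m i : ℝ) / a i)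
            ≤ sq2 (fun i => x i / a i + (a i)⁻¹) := by
              apply sq2_mono
              · intro i; exact div_nonneg (Nat.cast_nonneg _) (ha i).le
              · exact hstep
          _ ≤ sq2 (fun i => x i / a i) + c0 := sq2_triangle _ _
          _ ≤ (R - c0) + c0 := by linarith [hx.2]
          _ = R := by ring
      exact Set.mem_biUnion (hfin.mem_toFinset.mpr hmcnt) hmem
  calc volume (ellQ a (R - c0))
      ≤ volume ((⋃ m ∈ hfin.toFinset, cube m) ∪ (⋃ j, {x : Fin k → ℝ | x j = 0})) :=
        measure_mono hsub
    _ ≤ volume (⋃ m ∈ hfin.toFinset, cube m) + volume (⋃ j, {x : Fin k → ℝ | x j = 0}) :=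
        measure_union_le _ _
    _ = volume (⋃ m ∈ hfin.toFinset, cube m) := by
        rw [measure_iUnion_null fun j => volume_hyperplane j, add_zero]
    _ ≤ ∑ m ∈ hfin.toFinset, volume (cube m) := measure_biUnion_finset_le _ _
    _ = ((cntSet a R).ncard : ℝ≥0∞) := by
        simp [volume_cube, Set.ncard_eq_toFinset_card _ hfin]

/-! ### Real-valued counting bounds and the counting limit -/

lemma volume_Q1 (hk : 1 ≤ k) :
    volume {x : Fin k → ℝ | (∀ i, 0 ≤ x i) ∧ sq2 x ≤ 1} * 2 ^ k
      = volume (Metric.ball (0 : EuclideanSpace ℝ (Fin k)) 1) := by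
  have h := volume_orthant (Finset.univ : Finset (Fin k))
  rw [Finset.card_univ, Fintype.card_fin] at h
  have hset : {x : Fin k → ℝ | (∀ i ∈ Finset.univ, 0 ≤ x i) ∧ sq2 x ≤ 1}
      = {x : Fin k → ℝ | (∀ i, 0 ≤ x i) ∧ sq2 x ≤ 1} := by
    ext x; simp
  rw [hset] at h
  rw [h, volume_B hk]

lemma ball_volume_ne_top :
    volume (Metric.ball (0 : EuclideanSpace ℝ (Fin k)) 1) ≠ ⊤ :=
  (lt_of_le_of_lt (measure_mono Metric.ball_subset_closedBall)
    measure_closedBall_lt_top).ne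

lemma volume_Q1_ne_top (hk : 1 ≤ k) :
    volume {x : Fin k → ℝ | (∀ i, 0 ≤ x i) ∧ sq2 x ≤ 1} ≠ ⊤ := by
  intro htop
  have h := volume_Q1 (k := k) hk
  rw [htop, ENNReal.top_mul (by positivity)] at h
  exact ball_volume_ne_top h.symm

lemma volume_Q1_toReal (hk : 1 ≤ k) :
    (volume {x : Fin k → ℝ | (∀ i, 0 ≤ x i) ∧ sq2 x ≤ 1}).toReal
      = (volume (Metric.ball (0 : EuclideanSpace ℝ (Fin k)) 1)).toReal / 2 ^ k := by
  have h := congrArg ENNReal.toReal (volume_Q1 (k := k) hk)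
  rw [ENNReal.toReal_mul, ENNReal.toReal_pow] at h
  norm_num at h
  rw [eq_div_iff (by positivity : ((2 : ℝ) ^ k) ≠ 0)]
  exact h

lemma cnt_upper (hk : 1 ≤ k) (a : Fin k → ℝ) (ha : ∀ i, 0 < a i) {R : ℝ} (hR : 0 < R) :
    ((cntSet a R).ncard : ℝ)
      ≤ (volume (Metric.ball (0 : EuclideanSpace ℝ (Fin k)) 1)).toReal * (∏ i, a i) / 2 ^ k
        * R ^ k := by
  have h := ncard_le_volume a ha R
  have hprodnn : (0 : ℝ) ≤ ∏ i, a i := Finset.prod_nonneg fun i _ => (ha i).le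
  have hEne : volume (ellQ a R) ≠ ⊤ := by
    rw [volume_ellQ a ha hR]
    exact ENNReal.mul_ne_top ENNReal.ofReal_ne_top (volume_Q1_ne_top hk)
  have h2 := ENNReal.toReal_mono hEne h
  rw [ENNReal.toReal_natCast] at h2
  refine le_trans h2 (le_of_eq ?_)
  rw [volume_ellQ a ha hR, ENNReal.toReal_mul,
    ENNReal.toReal_ofReal (mul_nonneg hprodnn (pow_nonneg hR.le k)), volume_Q1_toReal hk]
  ring

lemma cnt_lower (hk : 1 ≤ k) (a : Fin k → ℝ) (ha : ∀ i, 0 < a i) {R : ℝ}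
    (hR : 0 < R - sq2 (fun i => (a i)⁻¹)) :
    (volume (Metric.ball (0 : EuclideanSpace ℝ (Fin k)) 1)).toReal * (∏ i, a i) / 2 ^ k
        * (R - sq2 (fun i => (a i)⁻¹)) ^ k
      ≤ ((cntSet a R).ncard : ℝ) := by
  have h := volume_le_ncard a ha R
  have hprodnn : (0 : ℝ) ≤ ∏ i, a i := Finset.prod_nonneg fun i _ => (ha i).le
  have h2 := ENNReal.toReal_mono (ENNReal.natCast_ne_top _) h
  rw [ENNReal.toReal_natCast] at h2
  refine le_trans (le_of_eq ?_) h2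
  rw [volume_ellQ a ha hR, ENNReal.toReal_mul,
    ENNReal.toReal_ofReal (mul_nonneg hprodnn (pow_nonneg hR.le k)), volume_Q1_toReal hk]
  ring

lemma cnt_tendsto (hk : 1 ≤ k) (a : Fin k → ℝ) (ha : ∀ i, 0 < a i) :
    Tendsto (fun R : ℝ => ((cntSet a R).ncard : ℝ) / R ^ k) atTop
      (nhds ((volume (Metric.ball (0 : EuclideanSpace ℝ (Fin k)) 1)).toReal
        * (∏ i, a i) / 2 ^ k)) := by
  set W := (volume (Metric.ball (0 : EuclideanSpace ℝ (Fin k)) 1)).toReal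
    * (∏ i, a i) / 2 ^ k with hWdef
  set c0 := sq2 (fun i : Fin k => (a i)⁻¹) with hc0def
  have hlow : Tendsto (fun R : ℝ => W * ((R - c0) / R) ^ k) atTop (nhds W) := by
    have h1 : Tendsto (fun R : ℝ => (R - c0) / R) atTop (nhds 1) := by
      have heq : (fun R : ℝ => (R - c0) / R) =ᶠ[atTop] fun R : ℝ => 1 - c0 * R⁻¹ := by
        filter_upwards [eventually_ne_atTop (0 : ℝ)] with R hR
        field_simp
      rw [tendsto_congr' heq]
      have h2 : Tendsto (fun R : ℝ => 1 - c0 * R⁻¹) atTop (nhds (1 - c0 * 0)) :=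
        tendsto_const_nhds.sub (tendsto_inv_atTop_zero.const_mul c0)
      simpa using h2
    have h3 := (h1.pow k).const_mul W
    simpa using h3
  apply tendsto_of_tendsto_of_tendsto_of_le_of_le' hlow tendsto_const_nhds
  · filter_upwards [eventually_gt_atTop c0, eventually_gt_atTop (0 : ℝ)] with R hR1 hR2
    have hlb := cnt_lower hk a ha (by linarith : 0 < R - sq2 (fun i => (a i)⁻¹))
    have heq : W * ((R - c0) / R) ^ k = W * (R - c0) ^ k / R ^ k := by
      rw [div_pow]; ring
    rw [heq]
    rw [div_le_div_iff₀ (pow_pos hR2 k) (pow_pos hR2 k)]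
    have h4 : W * (R - c0) ^ k ≤ ((cntSet a R).ncard : ℝ) := by
      rw [hc0def]
      exact le_trans (le_of_eq (by rw [hWdef])) hlb
    nlinarith [pow_pos hR2 k, h4]
  · filter_upwards [eventually_gt_atTop (0 : ℝ)] with R hR
    rw [div_le_iff₀ (pow_pos hR k)]
    exact cnt_upper hk a ha hR

lemma cnt_tendsto_scaled (hk : 1 ≤ k) (a : Fin k → ℝ) (ha : ∀ i, 0 < a i)
    {d : ℝ} (hd : 0 < d) :
    Tendsto (fun τ : ℝ => ((cntSet a (d * τ)).ncard : ℝ) / τ ^ k) atTop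
      (nhds ((volume (Metric.ball (0 : EuclideanSpace ℝ (Fin k)) 1)).toReal
        * (∏ i, a i) / 2 ^ k * d ^ k)) := by
  have h0 := cnt_tendsto hk a ha
  have hcomp := h0.comp (Tendsto.const_mul_atTop hd tendsto_id)
  have h1 := hcomp.mul_const (d ^ k)
  refine Tendsto.congr' ?_ h1
  filter_upwards [eventually_gt_atTop (0 : ℝ)] with τ hτ
  show ((cntSet a (d * τ)).ncard : ℝ) / (d * τ) ^ k * d ^ k
      = ((cntSet a (d * τ)).ncard : ℝ) / τ ^ k
  rw [mul_pow]
  have hd0 : d ^ k ≠ 0 := by positivity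
  have hτ0 : τ ^ k ≠ 0 := by positivity
  field_simp

/-! ### The analytic factor -/

/-- The correction factor `g(x) = (sinh x cosh x + x)/(sinh² x − x²)`. -/
noncomputable def gg (x : ℝ) : ℝ :=
  (Real.sinh x * Real.cosh x + x) / (Real.sinh x ^ 2 - x ^ 2)

lemma sinh_sq_sub_sq_pos {x : ℝ} (hx : 0 < x) : 0 < Real.sinh x ^ 2 - x ^ 2 := by
  have h1 : x < Real.sinh x := Real.self_lt_sinh_iff.mpr hx
  nlinarith [h1, hx]

lemma one_le_gg {x : ℝ} (hx : 0 < x) : 1 ≤ gg x := by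
  rw [gg, le_div_iff₀ (sinh_sq_sub_sq_pos hx), one_mul]
  have h1 : Real.cosh x - Real.sinh x = Real.exp (-x) := Real.cosh_sub_sinh x
  have h2 : 0 < Real.sinh x := Real.sinh_pos_iff.mpr hx
  have h3 : Real.sinh x * (Real.cosh x - Real.sinh x) = Real.sinh x * Real.exp (-x) := by
    rw [h1]
  have h4 : 0 < Real.sinh x * Real.exp (-x) := mul_pos h2 (Real.exp_pos _)
  nlinarith [h3, h4, hx, sq_nonneg x]

lemma tendsto_gg : Tendsto gg atTop (nhds 1) := by
  set A := fun x : ℝ => (Real.sinh x * Real.cosh x + x) * Real.exp (-(2 * x)) with hAdef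
  set B := fun x : ℝ => (Real.sinh x ^ 2 - x ^ 2) * Real.exp (-(2 * x)) with hBdef
  have e2 : ∀ x : ℝ, Real.exp (-x) ^ 2 = Real.exp (-(2 * x)) := by
    intro x
    rw [← Real.exp_nat_mul]
    norm_num
  have e4 : ∀ x : ℝ, Real.exp (-x) ^ 4 = Real.exp (-(4 * x)) := by
    intro x
    rw [← Real.exp_nat_mul]
    norm_num
  have hA : ∀ x, A x = (1 - Real.exp (-(4 * x))) / 4 + x * Real.exp (-(2 * x)) := by
    intro x
    rw [hAdef]
    simp only
    rw [Real.sinh_eq, Real.cosh_eq, ← e2, ← e4, Real.exp_neg]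
    have h := (Real.exp_pos x).ne'
    field_simp
    ring
  have hB : ∀ x, B x = (1 - 2 * Real.exp (-(2 * x)) + Real.exp (-(4 * x))) / 4
      - x ^ 2 * Real.exp (-(2 * x)) := by
    intro x
    rw [hBdef]
    simp only
    rw [Real.sinh_eq, ← e2, ← e4, Real.exp_neg]
    have h := (Real.exp_pos x).ne'
    field_simp
    ring
  have l2 : Tendsto (fun x : ℝ => Real.exp (-(2 * x))) atTop (nhds 0) := by
    have hneg : Tendsto (fun x : ℝ => -(2 * x)) atTop atBot :=
      tendsto_neg_atTop_atBot.comp (Tendsto.const_mul_atTop (two_pos : (0:ℝ) < 2) tendsto_id)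
    exact Real.tendsto_exp_atBot.comp hneg
  have l4 : Tendsto (fun x : ℝ => Real.exp (-(4 * x))) atTop (nhds 0) := by
    have hneg : Tendsto (fun x : ℝ => -(4 * x)) atTop atBot :=
      tendsto_neg_atTop_atBot.comp (Tendsto.const_mul_atTop (by norm_num : (0:ℝ) < 4) tendsto_id)
    exact Real.tendsto_exp_atBot.comp hneg
  have lx1 : Tendsto (fun x : ℝ => x * Real.exp (-(2 * x))) atTop (nhds 0) := by
    have hcomp : Tendsto (fun x : ℝ => (2 * x) ^ 1 * Real.exp (-(2 * x))) atTop (nhds 0) := by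
      have h0 := Real.tendsto_pow_mul_exp_neg_atTop_nhds_zero 1
      exact h0.comp (Tendsto.const_mul_atTop (two_pos : (0:ℝ) < 2) tendsto_id)
    have heq : (fun x : ℝ => x * Real.exp (-(2 * x)))
        = fun x : ℝ => (1 / 2 : ℝ) * ((2 * x) ^ 1 * Real.exp (-(2 * x))) := by
      funext x; ring
    rw [heq]
    simpa using hcomp.const_mul (1 / 2 : ℝ)
  have lx2 : Tendsto (fun x : ℝ => x ^ 2 * Real.exp (-(2 * x))) atTop (nhds 0) := by
    have hcomp : Tendsto (fun x : ℝ => (2 * x) ^ 2 * Real.exp (-(2 * x))) atTop (nhds 0) := by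
      have h0 := Real.tendsto_pow_mul_exp_neg_atTop_nhds_zero 2
      exact h0.comp (Tendsto.const_mul_atTop (two_pos : (0:ℝ) < 2) tendsto_id)
    have heq : (fun x : ℝ => x ^ 2 * Real.exp (-(2 * x)))
        = fun x : ℝ => (1 / 4 : ℝ) * ((2 * x) ^ 2 * Real.exp (-(2 * x))) := by
      funext x; ring
    rw [heq]
    simpa using hcomp.const_mul (1 / 4 : ℝ)
  have hAlim : Tendsto A atTop (nhds (1 / 4 : ℝ)) := by
    have h : Tendsto (fun x : ℝ => (1 - Real.exp (-(4 * x))) / 4 + x * Real.exp (-(2 * x)))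
        atTop (nhds ((1 - 0) / 4 + 0)) :=
      ((tendsto_const_nhds.sub l4).div_const 4).add lx1
    rw [funext hA]
    simpa using h
  have hBlim : Tendsto B atTop (nhds (1 / 4 : ℝ)) := by
    have h : Tendsto (fun x : ℝ =>
        (1 - 2 * Real.exp (-(2 * x)) + Real.exp (-(4 * x))) / 4
          - x ^ 2 * Real.exp (-(2 * x)))
        atTop (nhds ((1 - 2 * 0 + 0) / 4 - 0)) :=
      (((tendsto_const_nhds.sub (l2.const_mul 2)).add l4).div_const 4).sub lx2
    rw [funext hB]
    simpa using h
  have hdiv := hAlim.div hBlim (by norm_num : (1 / 4 : ℝ) ≠ 0)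
  have hfin : Tendsto gg atTop (nhds ((1 / 4 : ℝ) / (1 / 4 : ℝ))) := by
    refine hdiv.congr fun x => ?_
    show A x / B x = gg x
    rw [hAdef, hBdef, gg]
    simp only
    exact mul_div_mul_right _ _ (Real.exp_ne_zero _)
  simpa using hfin

lemma steklov_eq (b L ϱ : ℝ) :
    steklovCubed b L ϱ = 2 * b ^ 3 / ϱ ^ 3 * gg (b * L) := by
  rw [steklovCubed, gg, mul_pow]

end SteklovAux

/-- Weyl-type asymptotics of the counting function `A⁰(τ)` of the biharmonic
Steklov eigenvalues of the box `[0,l₁]×⋯×[0,l_{k+1}]` (Dirichlet-type lateral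
boundary conditions, positive-integer tuples `m`):
`A⁰(τ)/τ^k → ω_k (16^{1/3}π)^{−k} l₁⋯l_k ϱ^k` as `τ → ∞` (here `k = n − 1 ≥ 1`). -/
theorem box_counting_function_asymptotics_dirichlet
    (k : ℕ) (hk : 1 ≤ k) (l : Fin (k + 1) → ℝ) (hl : ∀ i, 0 < l i)
    (hln : ∀ i : Fin k, l i.castSucc < l (Fin.last k))
    (ϱ : ℝ) (hϱ : 0 < ϱ) :
    Tendsto (fun τ : ℝ =>
        (Set.ncard {m : Fin k → ℕ |
            (∀ i, 1 ≤ m i) ∧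
            steklovCubed (eta l m) (l (Fin.last k)) ϱ ≤ τ ^ 3} : ℝ) / τ ^ k)
      atTop
      (nhds ((MeasureTheory.volume
          (Metric.ball (0 : EuclideanSpace ℝ (Fin k)) 1)).toReal *
        (((16 : ℝ) ^ ((1 : ℝ) / 3) * Real.pi)⁻¹) ^ k *
        (∏ i : Fin k, l i.castSucc) * ϱ ^ k)) := by
  classical
  have hπ := Real.pi_pos
  set L := l (Fin.last k) with hLdef
  have hLpos : 0 < L := hl _
  set a : Fin k → ℝ := fun i => l i.castSucc / Real.pi with ha_def
  have ha : ∀ i, 0 < a i := fun i => div_pos (hl _) hπ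
  have heta : ∀ m : Fin k → ℕ,
      eta l m = SteklovAux.sq2 (fun i => (m i : ℝ) / a i) := by
    intro m
    rw [eta]
    unfold SteklovAux.sq2
    congr 1
    refine Finset.sum_congr rfl fun i _ => ?_
    rw [ha_def]
    simp only
    rw [div_div_eq_mul_div]
  have hetapos : ∀ m : Fin k → ℕ, (∀ i, 1 ≤ m i) → 0 < eta l m := by
    intro m hm
    rw [eta]
    apply Real.sqrt_pos.mpr
    have i0 : Fin k := ⟨0, hk⟩
    refine lt_of_lt_of_le ?_
      (Finset.single_le_sum (fun j _ => sq_nonneg _) (Finset.mem_univ i0))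
    have h1 : (1 : ℝ) ≤ (m i0 : ℝ) := by exact_mod_cast hm i0
    have h2 : 0 < (m i0 : ℝ) * Real.pi / l i0.castSucc :=
      div_pos (mul_pos (by linarith) hπ) (hl _)
    positivity
  set ω := (MeasureTheory.volume (Metric.ball (0 : EuclideanSpace ℝ (Fin k)) 1)).toReal with hωdef
  set W : ℝ := ω * (∏ i, a i) / 2 ^ k with hWdef
  set c : ℝ := ϱ / 2 ^ ((1 : ℝ) / 3) with hcdef
  have h2c : (0 : ℝ) < 2 ^ ((1 : ℝ) / 3) := Real.rpow_pos_of_pos two_pos _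
  have hcpos : 0 < c := div_pos hϱ h2c
  have hc3 : c ^ 3 = ϱ ^ 3 / 2 := by
    rw [hcdef, div_pow]
    congr 1
    rw [← Real.rpow_natCast ((2 : ℝ) ^ ((1 : ℝ) / 3)) 3,
      ← Real.rpow_mul (by norm_num : (0 : ℝ) ≤ 2)]
    norm_num
  have hconst : ω * (((16 : ℝ) ^ ((1 : ℝ) / 3) * Real.pi)⁻¹) ^ k
        * (∏ i : Fin k, l i.castSucc) * ϱ ^ k
      = W * c ^ k := by
    have h16 : (16 : ℝ) ^ ((1 : ℝ) / 3) = 2 * 2 ^ ((1 : ℝ) / 3) := by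
      have h1 : (16 : ℝ) = 2 ^ ((4 : ℕ) : ℝ) := by
        rw [Real.rpow_natCast]; norm_num
      rw [h1, ← Real.rpow_mul (by norm_num : (0 : ℝ) ≤ 2)]
      rw [show ((4 : ℕ) : ℝ) * (1 / 3) = 1 + 1 / 3 by norm_num,
        Real.rpow_add two_pos, Real.rpow_one]
    have hprod : ∏ i, a i = (∏ i : Fin k, l i.castSucc) / Real.pi ^ k := by
      rw [ha_def]
      simp only
      rw [Finset.prod_div_distrib, Finset.prod_const, Finset.card_univ, Fintype.card_fin]
    rw [hWdef, hcdef, hprod, h16]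
    have hπ0 : Real.pi ≠ 0 := hπ.ne'
    have h2c0 : (2 : ℝ) ^ ((1 : ℝ) / 3) ≠ 0 := h2c.ne'
    have hπk : Real.pi ^ k ≠ 0 := pow_ne_zero _ hπ0
    have h2ck : ((2 : ℝ) ^ ((1 : ℝ) / 3)) ^ k ≠ 0 := pow_ne_zero _ h2c0
    simp only [div_eq_mul_inv, mul_inv, mul_pow, inv_pow]
    ring
  rw [hconst]
  -- upper inclusion
  have hsubU : ∀ τ : ℝ, 0 ≤ τ →
      {m : Fin k → ℕ | (∀ i, 1 ≤ m i) ∧ steklovCubed (eta l m) L ϱ ≤ τ ^ 3}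
        ⊆ SteklovAux.cntSet a (c * τ) := by
    intro τ hτ m hm
    obtain ⟨hm1, hm2⟩ := hm
    refine ⟨hm1, ?_⟩
    rw [← heta m]
    have hb := hetapos m hm1
    have hbl : 0 < eta l m * L := mul_pos hb hLpos
    have hgg := SteklovAux.one_le_gg hbl
    have hpos : 0 < 2 * eta l m ^ 3 / ϱ ^ 3 := by positivity
    have hge : 2 * eta l m ^ 3 / ϱ ^ 3 ≤ steklovCubed (eta l m) L ϱ := by
      rw [SteklovAux.steklov_eq]
      nlinarith [hpos, hgg]
    have hle := le_trans hge hm2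
    rw [div_le_iff₀ (by positivity : (0 : ℝ) < ϱ ^ 3)] at hle
    have h3 : eta l m ^ 3 ≤ (c * τ) ^ 3 := by
      rw [mul_pow, hc3]
      nlinarith [hle]
    exact (pow_le_pow_iff_left₀ hb.le (mul_nonneg hcpos.le hτ)
      (by norm_num : (3 : ℕ) ≠ 0)).mp h3
  refine tendsto_order.2 ⟨fun b hb => ?_, fun b hb => ?_⟩
  · -- lower bound part: b < W * c ^ k
    have hu : Continuous (fun s : ℝ => W * c ^ k * s ^ k) :=
      continuous_const.mul (continuous_pow k)
    have h1 : ∀ᶠ s in nhds (1 : ℝ), b < W * c ^ k * s ^ k := by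
      have := (hu.tendsto 1).eventually (eventually_gt_nhds (by simpa using hb))
      simpa using this
    obtain ⟨δ, hδpos, hδ⟩ := Metric.eventually_nhds_iff.mp h1
    have hminpos : 0 < min (δ / 2) (1 / 2) := lt_min (by linarith) (by norm_num)
    set s₀ : ℝ := 1 - min (δ / 2) (1 / 2) with hs₀def
    have hmin_le : min (δ / 2) (1 / 2) ≤ 1 / 2 := min_le_right _ _
    have hs₀pos : 0 < s₀ := by rw [hs₀def]; linarith
    have hs₀lt : s₀ < 1 := by rw [hs₀def]; linarith
    have hbs : b < W * c ^ k * s₀ ^ k := by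
      apply hδ
      rw [Real.dist_eq, hs₀def, show (1 : ℝ) - min (δ / 2) (1 / 2) - 1
        = -(min (δ / 2) (1 / 2)) by ring, abs_neg, abs_of_nonneg hminpos.le]
      calc min (δ / 2) (1 / 2) ≤ δ / 2 := min_le_left _ _
        _ < δ := by linarith
    have hs3 : 1 < s₀⁻¹ ^ 3 :=
      one_lt_pow₀ ((one_lt_inv₀ hs₀pos).mpr hs₀lt) (by norm_num)
    obtain ⟨x₀, hx₀pos, hx₀⟩ : ∃ x₀ : ℝ, 0 < x₀ ∧ ∀ x, x₀ ≤ x → SteklovAux.gg x ≤ s₀⁻¹ ^ 3 := by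
      have h2 := SteklovAux.tendsto_gg.eventually (eventually_le_nhds hs3)
      rw [eventually_atTop] at h2
      obtain ⟨x₁, hx₁⟩ := h2
      exact ⟨max x₁ 1, lt_of_lt_of_le one_pos (le_max_right _ _),
        fun x hx => hx₁ x (le_trans (le_max_left _ _) hx)⟩
    have hsubL : ∀ τ : ℝ, 0 ≤ τ → SteklovAux.cntSet a (c * s₀ * τ) ⊆
        {m : Fin k → ℕ | (∀ i, 1 ≤ m i) ∧ steklovCubed (eta l m) L ϱ ≤ τ ^ 3}
          ∪ SteklovAux.cntSet a (x₀ / L) := by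
      intro τ hτ m hm
      obtain ⟨hm1, hm2⟩ := hm
      rw [← heta m] at hm2
      by_cases hsmall : eta l m ≤ x₀ / L
      · right
        refine ⟨hm1, ?_⟩
        rw [← heta m]
        exact hsmall
      · left
        push_neg at hsmall
        refine ⟨hm1, ?_⟩
        have hb0 := hetapos m hm1
        have hbL : x₀ ≤ eta l m * L := by
          rw [div_lt_iff₀ hLpos] at hsmall
          linarith
        have hggle := hx₀ _ hbL
        rw [SteklovAux.steklov_eq]
        have h1 : eta l m ^ 3 ≤ (c * s₀ * τ) ^ 3 := pow_le_pow_left₀ hb0.le hm2 3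
        calc 2 * eta l m ^ 3 / ϱ ^ 3 * SteklovAux.gg (eta l m * L)
            ≤ 2 * eta l m ^ 3 / ϱ ^ 3 * s₀⁻¹ ^ 3 :=
              mul_le_mul_of_nonneg_left hggle (by positivity)
          _ ≤ 2 * (c * s₀ * τ) ^ 3 / ϱ ^ 3 * s₀⁻¹ ^ 3 := by
              have h2 : 2 * eta l m ^ 3 / ϱ ^ 3 ≤ 2 * (c * s₀ * τ) ^ 3 / ϱ ^ 3 := by
                apply div_le_div_of_nonneg_right ?_ (by positivity)
                linarith
              exact mul_le_mul_of_nonneg_right h2 (by positivity)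
          _ = τ ^ 3 := by
              rw [mul_pow, mul_pow, hc3]
              field_simp
    -- limit comparison
    have hG1 := SteklovAux.cnt_tendsto_scaled hk a ha (mul_pos hcpos hs₀pos)
    have hG2 : Tendsto (fun τ : ℝ => ((SteklovAux.cntSet a (x₀ / L)).ncard : ℝ) / τ ^ k)
        atTop (nhds 0) :=
      tendsto_const_nhds.div_atTop (tendsto_pow_atTop (Nat.one_le_iff_ne_zero.mp hk))
    have hsum := hG1.sub hG2
    have hsum' : Tendsto (fun τ : ℝ =>
        ((SteklovAux.cntSet a (c * s₀ * τ)).ncard : ℝ) / τ ^ k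
          - ((SteklovAux.cntSet a (x₀ / L)).ncard : ℝ) / τ ^ k)
        atTop (nhds (W * c ^ k * s₀ ^ k)) := by
      have heqlim : ω * (∏ i, a i) / 2 ^ k * (c * s₀) ^ k - 0 = W * c ^ k * s₀ ^ k := by
        rw [hWdef, mul_pow]; ring
      rw [← heqlim]
      exact hsum
    have hev2 := (tendsto_order.1 hsum').1 b hbs
    filter_upwards [hev2, eventually_gt_atTop (0 : ℝ)] with τ hτ1 hτpos
    refine lt_of_lt_of_le hτ1 ?_
    have hfinS : {m : Fin k → ℕ | (∀ i, 1 ≤ m i)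
        ∧ steklovCubed (eta l m) L ϱ ≤ τ ^ 3}.Finite :=
      Set.Finite.subset (SteklovAux.cntSet_finite a ha (c * τ)) (hsubU τ hτpos.le)
    have hcard : (SteklovAux.cntSet a (c * s₀ * τ)).ncard
        ≤ {m : Fin k → ℕ | (∀ i, 1 ≤ m i)
            ∧ steklovCubed (eta l m) L ϱ ≤ τ ^ 3}.ncard
          + (SteklovAux.cntSet a (x₀ / L)).ncard := by
      refine le_trans (Set.ncard_le_ncard (hsubL τ hτpos.le) ?_) (Set.ncard_union_le _ _)
      exact hfinS.union (SteklovAux.cntSet_finite a ha _)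
    have hcast : ((SteklovAux.cntSet a (c * s₀ * τ)).ncard : ℝ)
        ≤ ({m : Fin k → ℕ | (∀ i, 1 ≤ m i)
            ∧ steklovCubed (eta l m) L ϱ ≤ τ ^ 3}.ncard : ℝ)
          + ((SteklovAux.cntSet a (x₀ / L)).ncard : ℝ) := by
      exact_mod_cast hcard
    rw [div_sub_div_same]
    refine (div_le_div_iff_of_pos_right (pow_pos hτpos k)).mpr ?_
    linarith [hcast]
  · -- upper bound part: W * c ^ k < b
    have hG := SteklovAux.cnt_tendsto_scaled hk a ha hcpos
    have hG' : Tendsto (fun τ : ℝ => ((SteklovAux.cntSet a (c * τ)).ncard : ℝ) / τ ^ k)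
        atTop (nhds (W * c ^ k)) := by
      have heqlim : ω * (∏ i, a i) / 2 ^ k * c ^ k = W * c ^ k := by rw [hWdef]
      rw [← heqlim]
      exact hG
    have h1 := (tendsto_order.1 hG').2 b hb
    filter_upwards [h1, eventually_gt_atTop (0 : ℝ)] with τ hτ1 hτpos
    refine lt_of_le_of_lt ?_ hτ1
    have hcard : {m : Fin k → ℕ | (∀ i, 1 ≤ m i)
          ∧ steklovCubed (eta l m) L ϱ ≤ τ ^ 3}.ncard
        ≤ (SteklovAux.cntSet a (c * τ)).ncard :=
      Set.ncard_le_ncard (hsubU τ hτpos.le) (SteklovAux.cntSet_finite a ha _)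
    have hcast : ({m : Fin k → ℕ | (∀ i, 1 ≤ m i)
          ∧ steklovCubed (eta l m) L ϱ ≤ τ ^ 3}.ncard : ℝ)
        ≤ ((SteklovAux.cntSet a (c * τ)).ncard : ℝ) := by exact_mod_cast hcard
    exact (div_le_div_iff_of_pos_right (pow_pos hτpos k)).mpr hcast
end
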